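/- arXiv:1912.11071 — 3 statements merged into one kernel-verified Lean document; each statement's English description precedes it below -/
import Mathlib

section
/- Let x be a random vector in R^d whose distribution is L8-L2 hypercontractive with second moment matrix Σ. Then the operator norm of E[‖x‖^2 · x x^⊤] is at most L · Tr(Σ) · ‖Σ‖, where ‖Σ‖ is the spectral norm of Σ. -/
open MeasureTheory Matrix
open scoped InnerProductSpace

/-- Spectral (operator) norm of a real matrix. -/
noncomputable def opNorm {d : ℕ} (A : Matrix (Fin d) (Fin d) ℝ) : ℝ :=
  ‖Matrix.toEuclideanCLM (𝕜 := ℝ) A‖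

/-- Cauchy–Schwarz for integrals. -/
lemma cs_int {Ω : Type*} [MeasurableSpace Ω] (μ : Measure Ω) (f g : Ω → ℝ)
    (hfg : Integrable (fun ω => f ω * g ω) μ) (hf2 : Integrable (fun ω => f ω ^ 2) μ)
    (hg2 : Integrable (fun ω => g ω ^ 2) μ) :
    (∫ ω, f ω * g ω ∂μ) ^ 2 ≤ (∫ ω, f ω ^ 2 ∂μ) * (∫ ω, g ω ^ 2 ∂μ) := by
  have key : ∀ t : ℝ, 0 ≤ (∫ ω, f ω ^ 2 ∂μ) * (t * t) + (2 * ∫ ω, f ω * g ω ∂μ) * t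
      + (∫ ω, g ω ^ 2 ∂μ) := by
    intro t
    have h0 : 0 ≤ ∫ ω, (t * f ω + g ω) ^ 2 ∂μ := integral_nonneg fun ω => sq_nonneg _
    have hexp : (fun ω => (t * f ω + g ω) ^ 2)
        = fun ω => (t * t) * f ω ^ 2 + (2 * t) * (f ω * g ω) + g ω ^ 2 := by
      funext ω; ring
    have hA : Integrable (fun ω => t * t * f ω ^ 2) μ := hf2.const_mul _
    have hB : Integrable (fun ω => 2 * t * (f ω * g ω)) μ := hfg.const_mul _
    have hAB : Integrable (fun ω => t * t * f ω ^ 2 + 2 * t * (f ω * g ω)) μ := hA.add hB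
    rw [hexp, integral_add hAB hg2, integral_add hA hB, MeasureTheory.integral_const_mul,
      MeasureTheory.integral_const_mul] at h0
    nlinarith [h0]
  have hd := discrim_le_zero key
  rw [discrim] at hd
  nlinarith [hd]

/-- Operator norm bound from a quadratic-form bound, for symmetric real matrices. -/
lemma opNorm_le_quad {d : ℕ} (A : Matrix (Fin d) (Fin d) ℝ) (hA : star A = A) (C : ℝ)
    (hC : 0 ≤ C)
    (h : ∀ v : EuclideanSpace ℝ (Fin d),
      |⟪(Matrix.toEuclideanCLM (𝕜 := ℝ) A) v, v⟫_ℝ| ≤ C * ‖v‖ ^ 2) :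
    ‖Matrix.toEuclideanCLM (𝕜 := ℝ) A‖ ≤ C := by
  set T := Matrix.toEuclideanCLM (𝕜 := ℝ) A with hT
  have hsa : IsSelfAdjoint T := by
    rw [hT]
    show star _ = _
    rw [← map_star]
    exact congrArg _ hA
  have hsym : ∀ u w : EuclideanSpace ℝ (Fin d), ⟪T u, w⟫_ℝ = ⟪u, T w⟫_ℝ :=
    fun u w => hsa.isSymmetric u w
  have hpol : ∀ u w : EuclideanSpace ℝ (Fin d), ⟪T u, w⟫_ℝ ≤ C / 2 * (‖u‖ ^ 2 + ‖w‖ ^ 2) := by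
    intro u w
    have e1 : ⟪T (u + w), u + w⟫_ℝ - ⟪T (u - w), u - w⟫_ℝ = 4 * ⟪T u, w⟫_ℝ := by
      have hc : ⟪T w, u⟫_ℝ = ⟪T u, w⟫_ℝ := by
        rw [hsym w u, real_inner_comm]
      simp only [map_add, map_sub, inner_add_left, inner_add_right, inner_sub_left,
        inner_sub_right]
      linarith [hc]
    have h1 := (abs_le.1 (h (u + w))).2
    have h2 := (abs_le.1 (h (u - w))).1
    have hpar := parallelogram_law_with_norm ℝ u w
    nlinarith [h1, h2, hpar, e1]
  refine T.opNorm_le_bound hC fun u => ?_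
  by_cases hTu : T u = 0
  · simp only [hTu, norm_zero]
    positivity
  · have hu : u ≠ 0 := fun h0 => hTu (by simp [h0])
    have hun : (0:ℝ) < ‖u‖ := norm_pos_iff.2 hu
    have hTun : (0:ℝ) < ‖T u‖ := norm_pos_iff.2 hTu
    set w : EuclideanSpace ℝ (Fin d) := (‖u‖ / ‖T u‖) • T u with hw
    have hwn : ‖w‖ = ‖u‖ := by
      rw [hw, norm_smul, Real.norm_eq_abs, abs_of_nonneg (by positivity), div_mul_cancel₀]
      exact ne_of_gt hTun
    have hiw : ⟪T u, w⟫_ℝ = ‖u‖ * ‖T u‖ := by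
      rw [hw, real_inner_smul_right, real_inner_self_eq_norm_sq]
      field_simp
    have hfin := hpol u w
    rw [hiw, hwn] at hfin
    have h2 : ‖T u‖ * ‖u‖ ≤ C * ‖u‖ * ‖u‖ := by nlinarith
    exact le_of_mul_le_mul_right (by nlinarith) hun

lemma quad_eq {d : ℕ} (A : Matrix (Fin d) (Fin d) ℝ) (w : EuclideanSpace ℝ (Fin d)) :
    ⟪(Matrix.toEuclideanCLM (𝕜 := ℝ) A) w, w⟫_ℝ = ∑ i, ∑ j, A i j * w j * w i := by
  have h1 : ∀ i, (Matrix.toEuclideanCLM (𝕜 := ℝ) A) w i = ∑ j, A i j * w j := by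
    intro i
    rfl
  rw [PiLp.inner_apply]
  simp only [RCLike.inner_apply, starRingEnd_apply, star_trivial]
  refine Finset.sum_congr rfl fun i _ => ?_
  rw [h1, Finset.mul_sum]
  exact Finset.sum_congr rfl fun j _ => by ring

/-- If `x` is L8-L2 hypercontractive with second moment matrix `Σ`, then
`‖E[‖x‖² x xᵀ]‖ ≤ L · Tr(Σ) · ‖Σ‖` in spectral norm. -/
theorem stmt2 {Ω : Type*} [MeasurableSpace Ω] (μ : Measure Ω) [IsProbabilityMeasure μ]
    {d : ℕ} (x : Ω → Fin d → ℝ) (L : ℝ) (hL : 0 < L)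
    (hxm : ∀ i, AEMeasurable (fun ω => x ω i) μ)
    (hint : ∀ v : Fin d → ℝ, Integrable (fun ω => (∑ i, v i * x ω i) ^ 8) μ)
    (hmom : ∀ v : Fin d → ℝ,
      ∫ ω, (∑ i, v i * x ω i) ^ 8 ∂μ ≤ L ^ 2 * (∫ ω, (∑ i, v i * x ω i) ^ 2 ∂μ) ^ 4) :
    opNorm (Matrix.of fun i j => ∫ ω, (∑ l, x ω l ^ 2) * (x ω i * x ω j) ∂μ) ≤
      L * (Matrix.of fun i j => ∫ ω, x ω i * x ω j ∂μ).trace *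
        opNorm (Matrix.of fun i j => ∫ ω, x ω i * x ω j ∂μ) := by
  classical
  have l28 : ∀ t : ℝ, t ^ 2 ≤ 1 + t ^ 8 := by
    intro t
    nlinarith [sq_nonneg (t ^ 4 - t), sq_nonneg (t ^ 3 - t), sq_nonneg t, sq_nonneg (t ^ 2 - 1),
      sq_nonneg (t ^ 2), sq_nonneg (t ^ 3), sq_nonneg (t ^ 4 - 1)]
  have l48 : ∀ t : ℝ, t ^ 4 ≤ 1 + t ^ 8 := by
    intro t
    nlinarith [sq_nonneg (t ^ 4 - 1), sq_nonneg (t ^ 4)]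
  -- single-coordinate reduction
  have hsingle : ∀ (i : Fin d) (ω : Ω), ∑ l, (Pi.single i (1:ℝ) : Fin d → ℝ) l * x ω l = x ω i := by
    intro i ω
    rw [Finset.sum_eq_single i]
    · simp
    · intro b _ hb
      simp [Pi.single_apply, hb]
    · simp
  have hx8 : ∀ i, Integrable (fun ω => x ω i ^ 8) μ := by
    intro i
    have h := hint (Pi.single i 1)
    simpa only [hsingle] using h
  have hx4 : ∀ i, Integrable (fun ω => x ω i ^ 4) μ := by
    intro i
    refine Integrable.mono' ((integrable_const 1).add (hx8 i))
      (((hxm i).pow_const 4).aestronglyMeasurable) ?_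
    filter_upwards with ω
    rw [Real.norm_eq_abs, abs_of_nonneg (by positivity)]
    exact l48 _
  have hxxint : ∀ i j, Integrable (fun ω => x ω i * x ω j) μ := by
    intro i j
    refine Integrable.mono'
      (((integrable_const 1).add (hx8 i)).add ((integrable_const 1).add (hx8 j)))
      (((hxm i).mul (hxm j)).aestronglyMeasurable) ?_
    filter_upwards with ω
    rw [Real.norm_eq_abs]
    show |x ω i * x ω j| ≤ 1 + x ω i ^ 8 + (1 + x ω j ^ 8)
    have h1 := l28 (x ω i)
    have h2 := l28 (x ω j)
    refine abs_le.2 ⟨by nlinarith [sq_nonneg (x ω i + x ω j)],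
      by nlinarith [sq_nonneg (x ω i - x ω j)]⟩
  have habc : ∀ a b c : ℝ, |a ^ 2 * (b * c)| ≤ 1 + a ^ 8 + (1 + b ^ 8) + (1 + c ^ 8) := by
    intro a b c
    have ha := l48 a
    have hb := l48 b
    have hc := l48 c
    refine abs_le.2 ⟨?_, ?_⟩
    · nlinarith [sq_nonneg (a ^ 2 + b * c), sq_nonneg (b ^ 2 - c ^ 2)]
    · nlinarith [sq_nonneg (a ^ 2 - b * c), sq_nonneg (b ^ 2 - c ^ 2)]
  have hNint : ∀ l i j, Integrable (fun ω => x ω l ^ 2 * (x ω i * x ω j)) μ := by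
    intro l i j
    refine Integrable.mono'
      ((((integrable_const 1).add (hx8 l)).add ((integrable_const 1).add (hx8 i))).add
        ((integrable_const 1).add (hx8 j)))
      ((((hxm l).pow_const 2).mul ((hxm i).mul (hxm j))).aestronglyMeasurable) ?_
    filter_upwards with ω
    rw [Real.norm_eq_abs]
    exact habc _ _ _
  have hMint : ∀ i j, Integrable (fun ω => (∑ l, x ω l ^ 2) * (x ω i * x ω j)) μ := by
    intro i j
    have he : (fun ω => (∑ l, x ω l ^ 2) * (x ω i * x ω j))
        = fun ω => ∑ l, x ω l ^ 2 * (x ω i * x ω j) := by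
      funext ω
      rw [Finset.sum_mul]
    rw [he]
    exact integrable_finset_sum _ fun l _ => hNint l i j
  have hSam : ∀ v : Fin d → ℝ, AEMeasurable (fun ω => ∑ i, v i * x ω i) μ := fun v =>
    Finset.aemeasurable_fun_sum _ fun i _ => ((hxm i).const_mul (v i))
  have h2int : ∀ v : Fin d → ℝ, Integrable (fun ω => (∑ i, v i * x ω i) ^ 2) μ := by
    intro v
    refine Integrable.mono' ((integrable_const 1).add (hint v))
      (((hSam v).pow_const 2).aestronglyMeasurable) ?_
    filter_upwards with ω
    rw [Real.norm_eq_abs, abs_of_nonneg (by positivity)]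
    exact l28 _
  have h4int : ∀ v : Fin d → ℝ, Integrable (fun ω => (∑ i, v i * x ω i) ^ 4) μ := by
    intro v
    refine Integrable.mono' ((integrable_const 1).add (hint v))
      (((hSam v).pow_const 4).aestronglyMeasurable) ?_
    filter_upwards with ω
    rw [Real.norm_eq_abs, abs_of_nonneg (by positivity)]
    exact l48 _
  have hx2S2int : ∀ (l : Fin d) (v : Fin d → ℝ),
      Integrable (fun ω => x ω l ^ 2 * (∑ i, v i * x ω i) ^ 2) μ := by
    intro l v
    refine Integrable.mono' ((hx4 l).add (h4int v))
      ((((hxm l).pow_const 2).mul ((hSam v).pow_const 2)).aestronglyMeasurable) ?_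
    filter_upwards with ω
    rw [Real.norm_eq_abs, abs_of_nonneg (by positivity)]
    show x ω l ^ 2 * (∑ i, v i * x ω i) ^ 2 ≤ x ω l ^ 4 + (∑ i, v i * x ω i) ^ 4
    nlinarith [sq_nonneg (x ω l ^ 2 - (∑ i, v i * x ω i) ^ 2), sq_nonneg (x ω l),
      sq_nonneg (∑ i, v i * x ω i)]
  have hP2nn : ∀ v : Fin d → ℝ, 0 ≤ ∫ ω, (∑ i, v i * x ω i) ^ 2 ∂μ := fun v =>
    integral_nonneg fun ω => sq_nonneg _
  -- fourth moment bound
  have hP4le : ∀ v : Fin d → ℝ, ∫ ω, (∑ i, v i * x ω i) ^ 4 ∂μ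
      ≤ L * (∫ ω, (∑ i, v i * x ω i) ^ 2 ∂μ) ^ 2 := by
    intro v
    have hf2 : Integrable (fun ω => ((∑ i, v i * x ω i) ^ 4) ^ 2) μ := by
      have he : (fun ω => ((∑ i, v i * x ω i) ^ 4) ^ 2)
          = fun ω => (∑ i, v i * x ω i) ^ 8 := by
        funext ω; ring
      rw [he]
      exact hint v
    have hfg : Integrable (fun ω => (∑ i, v i * x ω i) ^ 4 * (1:ℝ)) μ := by
      simpa using h4int v
    have hcs := cs_int μ (fun ω => (∑ i, v i * x ω i) ^ 4) (fun _ => (1:ℝ)) hfg hf2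
      (by simpa using (integrable_const (1:ℝ)))
    have e1 : ∫ ω, (∑ i, v i * x ω i) ^ 4 * (1:ℝ) ∂μ = ∫ ω, (∑ i, v i * x ω i) ^ 4 ∂μ := by
      simp
    have e2 : ∫ ω, ((∑ i, v i * x ω i) ^ 4) ^ 2 ∂μ = ∫ ω, (∑ i, v i * x ω i) ^ 8 ∂μ :=
      integral_congr_ae (Filter.Eventually.of_forall fun ω => by ring)
    have e3 : ∫ _ω, ((1:ℝ)) ^ 2 ∂μ = 1 := by simp
    rw [e1, e2, e3, mul_one] at hcs
    have h8 := hmom v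
    have hP4nn : 0 ≤ ∫ ω, (∑ i, v i * x ω i) ^ 4 ∂μ :=
      integral_nonneg fun ω => by positivity
    have hb : 0 ≤ L * (∫ ω, (∑ i, v i * x ω i) ^ 2 ∂μ) ^ 2 := by
      have := hP2nn v
      positivity
    refine le_of_pow_le_pow_left₀ two_ne_zero hb ?_
    nlinarith [hcs, h8, hP4nn, hP2nn v]
  have hdiag : ∀ l, ∫ ω, x ω l ^ 4 ∂μ ≤ L * (∫ ω, x ω l ^ 2 ∂μ) ^ 2 := by
    intro l
    have h := hP4le (Pi.single l 1)
    simpa only [hsingle] using h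
  -- key per-coordinate estimate
  have hkey : ∀ (l : Fin d) (v : Fin d → ℝ),
      ∫ ω, x ω l ^ 2 * (∑ i, v i * x ω i) ^ 2 ∂μ
        ≤ L * (∫ ω, x ω l ^ 2 ∂μ) * (∫ ω, (∑ i, v i * x ω i) ^ 2 ∂μ) := by
    intro l v
    have hf2 : Integrable (fun ω => (x ω l ^ 2) ^ 2) μ := by
      have he : (fun ω => (x ω l ^ 2) ^ 2) = fun ω => x ω l ^ 4 := by
        funext ω; ring
      rw [he]
      exact hx4 l
    have hg2 : Integrable (fun ω => ((∑ i, v i * x ω i) ^ 2) ^ 2) μ := by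
      have he : (fun ω => ((∑ i, v i * x ω i) ^ 2) ^ 2)
          = fun ω => (∑ i, v i * x ω i) ^ 4 := by
        funext ω; ring
      rw [he]
      exact h4int v
    have hcs := cs_int μ (fun ω => x ω l ^ 2) (fun ω => (∑ i, v i * x ω i) ^ 2)
      (hx2S2int l v) hf2 hg2
    have e1 : ∫ ω, (x ω l ^ 2) ^ 2 ∂μ = ∫ ω, x ω l ^ 4 ∂μ :=
      integral_congr_ae (Filter.Eventually.of_forall fun ω => by ring)
    have e2 : ∫ ω, ((∑ i, v i * x ω i) ^ 2) ^ 2 ∂μ = ∫ ω, (∑ i, v i * x ω i) ^ 4 ∂μ :=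
      integral_congr_ae (Filter.Eventually.of_forall fun ω => by ring)
    rw [e1, e2] at hcs
    have h1 := hdiag l
    have h2 := hP4le v
    have ha : 0 ≤ ∫ ω, x ω l ^ 2 * (∑ i, v i * x ω i) ^ 2 ∂μ :=
      integral_nonneg fun ω => by positivity
    have hσ : 0 ≤ ∫ ω, x ω l ^ 2 ∂μ := integral_nonneg fun ω => sq_nonneg _
    have hp2 := hP2nn v
    have hF4 : 0 ≤ ∫ ω, x ω l ^ 4 ∂μ := integral_nonneg fun ω => by positivity
    have hG4 : 0 ≤ ∫ ω, (∑ i, v i * x ω i) ^ 4 ∂μ := integral_nonneg fun ω => by positivity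
    have hb : 0 ≤ L * (∫ ω, x ω l ^ 2 ∂μ) * (∫ ω, (∑ i, v i * x ω i) ^ 2 ∂μ) := by positivity
    refine le_of_pow_le_pow_left₀ two_ne_zero hb ?_
    have hm1 : (∫ ω, x ω l ^ 4 ∂μ) * (∫ ω, (∑ i, v i * x ω i) ^ 4 ∂μ)
        ≤ (L * (∫ ω, x ω l ^ 2 ∂μ) ^ 2) * (L * (∫ ω, (∑ i, v i * x ω i) ^ 2 ∂μ) ^ 2) := by
      have hbl : 0 ≤ L * (∫ ω, x ω l ^ 2 ∂μ) ^ 2 := by positivity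
      exact mul_le_mul h1 h2 hG4 hbl
    nlinarith [hcs, hm1]

  -- double-sum/integral exchange for the second-moment matrix
  have hswapS : ∀ w : Fin d → ℝ,
      ∑ i, ∑ j, (∫ ω, x ω i * x ω j ∂μ) * w j * w i = ∫ ω, (∑ i, w i * x ω i) ^ 2 ∂μ := by
    intro w
    have h1 : ∀ i j : Fin d, (∫ ω, x ω i * x ω j ∂μ) * w j * w i
        = ∫ ω, x ω i * x ω j * w j * w i ∂μ := by
      intro i j
      rw [MeasureTheory.integral_mul_const, MeasureTheory.integral_mul_const]
    calc ∑ i, ∑ j, (∫ ω, x ω i * x ω j ∂μ) * w j * w i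
        = ∑ i, ∑ j, ∫ ω, x ω i * x ω j * w j * w i ∂μ :=
          Finset.sum_congr rfl fun i _ => Finset.sum_congr rfl fun j _ => h1 i j
      _ = ∫ ω, ∑ i, ∑ j, x ω i * x ω j * w j * w i ∂μ := by
          rw [integral_finset_sum _ (fun i _ => integrable_finset_sum _ fun j _ =>
            ((hxxint i j).mul_const _).mul_const _)]
          exact Finset.sum_congr rfl fun i _ => (integral_finset_sum _ fun j _ =>
            ((hxxint i j).mul_const _).mul_const _).symm
      _ = ∫ ω, (∑ i, w i * x ω i) ^ 2 ∂μ := by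
          refine integral_congr_ae (Filter.Eventually.of_forall fun ω => ?_)
          show ∑ i, ∑ j, x ω i * x ω j * w j * w i = (∑ i, w i * x ω i) ^ 2
          rw [pow_two, Finset.sum_mul_sum]
          exact Finset.sum_congr rfl fun i _ => Finset.sum_congr rfl fun j _ => by ring
  have hswapM : ∀ w : Fin d → ℝ,
      ∑ i, ∑ j, (∫ ω, (∑ l, x ω l ^ 2) * (x ω i * x ω j) ∂μ) * w j * w i
        = ∫ ω, (∑ l, x ω l ^ 2) * (∑ i, w i * x ω i) ^ 2 ∂μ := by
    intro w
    have h1 : ∀ i j : Fin d, (∫ ω, (∑ l, x ω l ^ 2) * (x ω i * x ω j) ∂μ) * w j * w i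
        = ∫ ω, (∑ l, x ω l ^ 2) * (x ω i * x ω j) * w j * w i ∂μ := by
      intro i j
      rw [MeasureTheory.integral_mul_const, MeasureTheory.integral_mul_const]
    calc ∑ i, ∑ j, (∫ ω, (∑ l, x ω l ^ 2) * (x ω i * x ω j) ∂μ) * w j * w i
        = ∑ i, ∑ j, ∫ ω, (∑ l, x ω l ^ 2) * (x ω i * x ω j) * w j * w i ∂μ :=
          Finset.sum_congr rfl fun i _ => Finset.sum_congr rfl fun j _ => h1 i j
      _ = ∫ ω, ∑ i, ∑ j, (∑ l, x ω l ^ 2) * (x ω i * x ω j) * w j * w i ∂μ := by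
          rw [integral_finset_sum _ (fun i _ => integrable_finset_sum _ fun j _ =>
            ((hMint i j).mul_const _).mul_const _)]
          exact Finset.sum_congr rfl fun i _ => (integral_finset_sum _ fun j _ =>
            ((hMint i j).mul_const _).mul_const _).symm
      _ = ∫ ω, (∑ l, x ω l ^ 2) * (∑ i, w i * x ω i) ^ 2 ∂μ := by
          refine integral_congr_ae (Filter.Eventually.of_forall fun ω => ?_)
          show ∑ i, ∑ j, (∑ l, x ω l ^ 2) * (x ω i * x ω j) * w j * w i
            = (∑ l, x ω l ^ 2) * (∑ i, w i * x ω i) ^ 2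
          rw [pow_two, Finset.sum_mul_sum, Finset.mul_sum]
          refine Finset.sum_congr rfl fun i _ => ?_
          rw [Finset.mul_sum]
          exact Finset.sum_congr rfl fun j _ => by ring
  have hQnn : ∀ w : Fin d → ℝ, 0 ≤ ∫ ω, (∑ l, x ω l ^ 2) * (∑ i, w i * x ω i) ^ 2 ∂μ :=
    fun w => integral_nonneg fun ω =>
      mul_nonneg (Finset.sum_nonneg fun l _ => sq_nonneg _) (sq_nonneg _)
  have htr_eq : (Matrix.of fun i j => ∫ ω, x ω i * x ω j ∂μ).trace
      = ∑ l, ∫ ω, x ω l ^ 2 ∂μ := by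
    have h1 : ∀ l : Fin d, ∫ ω, x ω l * x ω l ∂μ = ∫ ω, x ω l ^ 2 ∂μ := fun l =>
      integral_congr_ae (Filter.Eventually.of_forall fun ω => by
        show x ω l * x ω l = x ω l ^ 2
        ring)
    rw [Matrix.trace]
    simp only [Matrix.diag_apply, Matrix.of_apply]
    exact Finset.sum_congr rfl fun l _ => h1 l
  have htrnn : 0 ≤ ∑ l, ∫ ω, x ω l ^ 2 ∂μ :=
    Finset.sum_nonneg fun l _ => integral_nonneg fun ω => sq_nonneg _
  have hQle : ∀ w : Fin d → ℝ, ∫ ω, (∑ l, x ω l ^ 2) * (∑ i, w i * x ω i) ^ 2 ∂μ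
      ≤ L * (∑ l, ∫ ω, x ω l ^ 2 ∂μ) * (∫ ω, (∑ i, w i * x ω i) ^ 2 ∂μ) := by
    intro w
    have e : ∫ ω, (∑ l, x ω l ^ 2) * (∑ i, w i * x ω i) ^ 2 ∂μ
        = ∑ l, ∫ ω, x ω l ^ 2 * (∑ i, w i * x ω i) ^ 2 ∂μ := by
      rw [← integral_finset_sum _ (fun l _ => hx2S2int l w)]
      refine integral_congr_ae (Filter.Eventually.of_forall fun ω => ?_)
      show (∑ l, x ω l ^ 2) * (∑ i, w i * x ω i) ^ 2 = ∑ l, x ω l ^ 2 * (∑ i, w i * x ω i) ^ 2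
      rw [Finset.sum_mul]
    rw [e]
    calc ∑ l, ∫ ω, x ω l ^ 2 * (∑ i, w i * x ω i) ^ 2 ∂μ
        ≤ ∑ l, L * (∫ ω, x ω l ^ 2 ∂μ) * (∫ ω, (∑ i, w i * x ω i) ^ 2 ∂μ) :=
          Finset.sum_le_sum fun l _ => hkey l w
      _ = L * (∑ l, ∫ ω, x ω l ^ 2 ∂μ) * (∫ ω, (∑ i, w i * x ω i) ^ 2 ∂μ) := by
          rw [← Finset.sum_mul, ← Finset.mul_sum]
  have hMsym : star (Matrix.of fun i j => ∫ ω, (∑ l, x ω l ^ 2) * (x ω i * x ω j) ∂μ)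
      = Matrix.of fun i j => ∫ ω, (∑ l, x ω l ^ 2) * (x ω i * x ω j) ∂μ := by
    rw [Matrix.star_eq_conjTranspose]
    ext i j
    rw [Matrix.conjTranspose_apply, Matrix.of_apply, Matrix.of_apply, star_trivial]
    exact integral_congr_ae (Filter.Eventually.of_forall fun ω => by ring)
  -- assembly
  simp only [opNorm]
  rw [htr_eq]
  have hC : 0 ≤ L * (∑ l, ∫ ω, x ω l ^ 2 ∂μ) *
      ‖Matrix.toEuclideanCLM (𝕜 := ℝ) (Matrix.of fun i j => ∫ ω, x ω i * x ω j ∂μ)‖ :=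
    mul_nonneg (mul_nonneg hL.le htrnn) (norm_nonneg _)
  refine opNorm_le_quad _ hMsym _ hC ?_
  intro w
  rw [quad_eq]
  simp only [Matrix.of_apply]
  rw [hswapM w, abs_of_nonneg (hQnn w)]
  refine le_trans (hQle w) ?_
  have hP2w : ∫ ω, (∑ i, w i * x ω i) ^ 2 ∂μ
      = ⟪(Matrix.toEuclideanCLM (𝕜 := ℝ) (Matrix.of fun i j => ∫ ω, x ω i * x ω j ∂μ)) w, w⟫_ℝ := by
    rw [quad_eq]
    simp only [Matrix.of_apply]
    exact (hswapS w).symm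
  have hP2b : ∫ ω, (∑ i, w i * x ω i) ^ 2 ∂μ
      ≤ ‖Matrix.toEuclideanCLM (𝕜 := ℝ) (Matrix.of fun i j => ∫ ω, x ω i * x ω j ∂μ)‖
        * ‖w‖ ^ 2 := by
    rw [hP2w]
    calc ⟪(Matrix.toEuclideanCLM (𝕜 := ℝ) (Matrix.of fun i j => ∫ ω, x ω i * x ω j ∂μ)) w, w⟫_ℝ
        ≤ ‖(Matrix.toEuclideanCLM (𝕜 := ℝ) (Matrix.of fun i j => ∫ ω, x ω i * x ω j ∂μ)) w‖
          * ‖w‖ := real_inner_le_norm _ _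
      _ ≤ ‖Matrix.toEuclideanCLM (𝕜 := ℝ) (Matrix.of fun i j => ∫ ω, x ω i * x ω j ∂μ)‖
          * ‖w‖ * ‖w‖ :=
          mul_le_mul_of_nonneg_right
            ((Matrix.toEuclideanCLM (𝕜 := ℝ)
              (Matrix.of fun i j => ∫ ω, x ω i * x ω j ∂μ)).le_opNorm w) (norm_nonneg w)
      _ = _ := by ring
  calc L * (∑ l, ∫ ω, x ω l ^ 2 ∂μ) * (∫ ω, (∑ i, w i * x ω i) ^ 2 ∂μ)
      ≤ L * (∑ l, ∫ ω, x ω l ^ 2 ∂μ) *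
        (‖Matrix.toEuclideanCLM (𝕜 := ℝ) (Matrix.of fun i j => ∫ ω, x ω i * x ω j ∂μ)‖
          * ‖w‖ ^ 2) :=
        mul_le_mul_of_nonneg_left hP2b (mul_nonneg hL.le htrnn)
    _ = _ := by ring
end

section
/- Let v be a mean-zero random vector in R^d with covariance Σ which is L8-L2 hypercontractive, and let ṽ = v·1{‖v‖ ≤ α} be its truncation at level α. Then the spectral norm of E[ṽṽ^⊤] − Σ is at most L·‖Σ‖·Tr(Σ)/α². -/
open MeasureTheory Matrix
open RealInnerProductSpace

/-- Cauchy–Schwarz for integrals. -/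
lemma int_cs {Ω : Type*} [MeasurableSpace Ω] (μ : Measure Ω) (f g : Ω → ℝ)
    (hf : Integrable (fun ω => f ω ^ 2) μ) (hg : Integrable (fun ω => g ω ^ 2) μ)
    (hfg : Integrable (fun ω => f ω * g ω) μ) :
    (∫ ω, f ω * g ω ∂μ) ^ 2 ≤ (∫ ω, f ω ^ 2 ∂μ) * (∫ ω, g ω ^ 2 ∂μ) := by
  have h : ∀ t : ℝ, 0 ≤ (∫ ω, g ω ^ 2 ∂μ) * (t * t) + (2 * ∫ ω, f ω * g ω ∂μ) * t
      + ∫ ω, f ω ^ 2 ∂μ := by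
    intro t
    have h0 : 0 ≤ ∫ ω, (f ω + t * g ω) ^ 2 ∂μ := integral_nonneg fun ω => sq_nonneg _
    have he : (fun ω => (f ω + t * g ω) ^ 2)
        = fun ω => ((t * t) * g ω ^ 2 + (2 * t) * (f ω * g ω)) + f ω ^ 2 := by
      funext ω; ring
    have hA : Integrable (fun ω => (t * t) * g ω ^ 2 + (2 * t) * (f ω * g ω)) μ :=
      (hg.const_mul (t*t)).add (hfg.const_mul (2*t))
    have hB : Integrable (fun ω => (t * t) * g ω ^ 2) μ := hg.const_mul (t*t)
    have hC : Integrable (fun ω => (2 * t) * (f ω * g ω)) μ := hfg.const_mul (2*t)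
    have h1 : ∫ ω, (((t * t) * g ω ^ 2 + (2 * t) * (f ω * g ω)) + f ω ^ 2) ∂μ
        = ((t * t) * ∫ ω, g ω ^ 2 ∂μ + (2 * t) * ∫ ω, f ω * g ω ∂μ) + ∫ ω, f ω ^ 2 ∂μ := by
      rw [integral_add hA hf, integral_add hB hC, integral_const_mul, integral_const_mul]
    rw [he, h1] at h0
    linarith
  have := discrim_le_zero h
  rw [discrim] at this
  nlinarith [this]

/-- A self-adjoint operator bound from the quadratic form. -/
lemma symm_norm_le {E : Type*} [NormedAddCommGroup E] [InnerProductSpace ℝ E]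
    (T : E →L[ℝ] E) (hsym : ∀ x y : E, ⟪T x, y⟫ = ⟪x, T y⟫) {C : ℝ} (hC : 0 ≤ C)
    (h : ∀ x : E, |⟪T x, x⟫| ≤ C * ‖x‖ ^ 2) : ‖T‖ ≤ C := by
  have key : ∀ x y : E, ⟪T x, y⟫ ≤ (C / 2) * (‖x‖ ^ 2 + ‖y‖ ^ 2) := by
    intro x y
    have e1 : ⟪T (x + y), x + y⟫ - ⟪T (x - y), x - y⟫ = 4 * ⟪T x, y⟫ := by
      have h1 : ⟪T y, x⟫ = ⟪T x, y⟫ := by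
        rw [hsym y x, real_inner_comm]
      simp only [map_add, map_sub, inner_add_add_self, inner_sub_sub_self,
        inner_add_left, inner_add_right, inner_sub_left, inner_sub_right]
      linarith [h1]
    have h2 := (abs_le.1 (h (x + y))).2
    have h3 := (abs_le.1 (h (x - y))).1
    have pl : ‖x + y‖ ^ 2 + ‖x - y‖ ^ 2 = 2 * (‖x‖ ^ 2 + ‖y‖ ^ 2) := by
      rw [← real_inner_self_eq_norm_sq, ← real_inner_self_eq_norm_sq,
        ← real_inner_self_eq_norm_sq, ← real_inner_self_eq_norm_sq,
        inner_add_add_self, inner_sub_sub_self]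
      ring
    nlinarith [e1, h2, h3, pl]
  have key3 : ∀ x y : E, ⟪T x, y⟫ ≤ C * (‖x‖ * ‖y‖) := by
    intro x y
    rcases eq_or_ne x 0 with rfl | hx0
    · simp [hC]
    rcases eq_or_ne y 0 with rfl | hy0
    · simp
    have hxn : (0:ℝ) < ‖x‖ := norm_pos_iff.2 hx0
    have hyn : (0:ℝ) < ‖y‖ := norm_pos_iff.2 hy0
    set a : ℝ := Real.sqrt (‖y‖ / ‖x‖) with ha
    have ha0 : 0 < a := Real.sqrt_pos.2 (by positivity)
    have ha2 : a ^ 2 = ‖y‖ / ‖x‖ := Real.sq_sqrt (by positivity)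
    have hinner : ⟪T (a • x), a⁻¹ • y⟫ = ⟪T x, y⟫ := by
      rw [_root_.map_smul, real_inner_smul_left, real_inner_smul_right]
      field_simp
    have hb := key (a • x) (a⁻¹ • y)
    rw [hinner] at hb
    have hna : ‖a • x‖ ^ 2 = a ^ 2 * ‖x‖ ^ 2 := by
      rw [norm_smul]; rw [Real.norm_eq_abs, mul_pow, sq_abs]
    have hnb : ‖a⁻¹ • y‖ ^ 2 = (a ^ 2)⁻¹ * ‖y‖ ^ 2 := by
      rw [norm_smul]; rw [Real.norm_eq_abs, mul_pow, sq_abs, inv_pow]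
    rw [hna, hnb, ha2] at hb
    have he1 : ‖y‖ / ‖x‖ * ‖x‖ ^ 2 = ‖x‖ * ‖y‖ := by field_simp
    have he2 : (‖y‖ / ‖x‖)⁻¹ * ‖y‖ ^ 2 = ‖x‖ * ‖y‖ := by field_simp
    rw [he1, he2] at hb
    calc ⟪T x, y⟫ ≤ C / 2 * (‖x‖ * ‖y‖ + ‖x‖ * ‖y‖) := hb
    _ = C * (‖x‖ * ‖y‖) := by ring
  refine T.opNorm_le_bound hC fun x => ?_
  rcases eq_or_ne (T x) 0 with h0 | h0
  · rw [h0]; simp; positivity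
  have hTx : (0:ℝ) < ‖T x‖ := norm_pos_iff.2 h0
  have := key3 x (T x)
  have hsq : ‖T x‖ ^ 2 = ⟪T x, T x⟫ := (real_inner_self_eq_norm_sq _).symm
  nlinarith [this, hsq]

/-- Inner product of a Euclidean CLM matrix action, in coordinates. -/
lemma euclidean_inner_matrix {d : ℕ} (B : Matrix (Fin d) (Fin d) ℝ)
    (x y : EuclideanSpace ℝ (Fin d)) :
    ⟪(Matrix.toEuclideanCLM (𝕜 := ℝ) B) x, y⟫ = ∑ i, (∑ j, B i j * x j) * y i := by
  have : (Matrix.toEuclideanCLM (𝕜 := ℝ) B) x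
      = (WithLp.equiv 2 (Fin d → ℝ)).symm (B *ᵥ (WithLp.equiv 2 (Fin d → ℝ)) x) :=
    rfl
  rw [this]
  simp [PiLp.inner_apply, RCLike.inner_apply, Matrix.mulVec, dotProduct, WithLp.equiv,
    Equiv.refl, Equiv.coe_fn_mk]
  simp [Finset.sum_mul, mul_comm]

lemma euclidean_norm_sq {d : ℕ} (x : EuclideanSpace ℝ (Fin d)) : ‖x‖ ^ 2 = ∑ i, x i ^ 2 := by
  rw [EuclideanSpace.norm_sq_eq]
  simp


/-- Second moment matrix `E[v vᵀ]` of a random vector. -/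
noncomputable def secondMoment {Ω : Type*} [MeasurableSpace Ω] (μ : Measure Ω) {d : ℕ}
    (v : Ω → Fin d → ℝ) : Matrix (Fin d) (Fin d) ℝ :=
  Matrix.of fun i j => ∫ ω, v ω i * v ω j ∂μ

/-- Truncation bias bound for covariance: if `v` is mean-zero with covariance `Σ`,
L8-L2 hypercontractive, and `ṽ = v·1{‖v‖ ≤ α}`, then
`‖E[ṽṽᵀ] − Σ‖ ≤ L ‖Σ‖ Tr(Σ) / α²`. -/
theorem stmt3 {Ω : Type*} [MeasurableSpace Ω] (μ : Measure Ω) [IsProbabilityMeasure μ]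
    {d : ℕ} (v : Ω → Fin d → ℝ) (L α : ℝ) (hL : 0 < L) (hα : 0 < α)
    (hvm : ∀ i, AEMeasurable (fun ω => v ω i) μ)
    (hint : ∀ u : Fin d → ℝ, Integrable (fun ω => (∑ i, u i * v ω i) ^ 8) μ)
    (hmean : ∀ i, ∫ ω, v ω i ∂μ = 0)
    (hmom : ∀ u : Fin d → ℝ,
      ∫ ω, (∑ i, u i * v ω i) ^ 8 ∂μ ≤ L ^ 2 * (∫ ω, (∑ i, u i * v ω i) ^ 2 ∂μ) ^ 4) :
    opNorm
      ((Matrix.of fun i j =>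
          ∫ ω, (if (∑ l, v ω l ^ 2) ≤ α ^ 2 then v ω i * v ω j else 0) ∂μ) -
        secondMoment μ v) ≤
      L * opNorm (secondMoment μ v) * (secondMoment μ v).trace / α ^ 2 := by
  classical
  -- notation
  set ind' : Ω → ℝ := fun ω => if (∑ l, v ω l ^ 2) ≤ α ^ 2 then 0 else 1 with hind'def
  -- measurability of linear forms
  have hXm : ∀ u : Fin d → ℝ, AEMeasurable (fun ω => ∑ i, u i * v ω i) μ := fun u =>
    Finset.aemeasurable_fun_sum _ fun i _ => (hvm i).const_mul (u i)
  -- integrability of powers of linear forms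
  have hX2 : ∀ u : Fin d → ℝ, Integrable (fun ω => (∑ i, u i * v ω i) ^ 2) μ := by
    intro u
    have hg : Integrable (fun ω => 1 + (∑ i, u i * v ω i) ^ 8) μ :=
      (integrable_const 1).add (hint u)
    refine Integrable.mono' hg
      (((hXm u).pow_const 2).aestronglyMeasurable) (Filter.Eventually.of_forall fun ω => ?_)
    set t := ∑ i, u i * v ω i
    rw [Real.norm_eq_abs, abs_of_nonneg (sq_nonneg t)]
    nlinarith [sq_nonneg (t^2 - 1), sq_nonneg (t^4 - 1), sq_nonneg (t^4)]
  have hX4 : ∀ u : Fin d → ℝ, Integrable (fun ω => (∑ i, u i * v ω i) ^ 4) μ := by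
    intro u
    have hg : Integrable (fun ω => 1 + (∑ i, u i * v ω i) ^ 8) μ :=
      (integrable_const 1).add (hint u)
    refine Integrable.mono' hg
      (((hXm u).pow_const 4).aestronglyMeasurable) (Filter.Eventually.of_forall fun ω => ?_)
    set t := ∑ i, u i * v ω i
    have h4 : |t ^ 4| = t ^ 4 := abs_of_nonneg (by positivity)
    rw [Real.norm_eq_abs, h4]
    nlinarith [sq_nonneg (t^4 - 1), sq_nonneg (t^4)]
  -- single coordinates
  have hXe : ∀ (i : Fin d) (ω : Ω), ∑ l, (Pi.single i 1 : Fin d → ℝ) l * v ω l = v ω i := by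
    intro i ω
    rw [Finset.sum_eq_single i (fun b _ hb => by simp [Pi.single_apply, hb]) (by simp)]
    simp
  have hv2 : ∀ i, Integrable (fun ω => v ω i ^ 2) μ := fun i =>
    (hX2 (Pi.single i 1)).congr (Filter.Eventually.of_forall fun ω => by simp only [hXe])
  have hv4 : ∀ i, Integrable (fun ω => v ω i ^ 4) μ := fun i =>
    (hX4 (Pi.single i 1)).congr (Filter.Eventually.of_forall fun ω => by simp only [hXe])
  have hvij : ∀ i j, Integrable (fun ω => v ω i * v ω j) μ := by
    intro i j
    have hg : Integrable (fun ω => v ω i ^ 2 + v ω j ^ 2) μ := (hv2 i).add (hv2 j)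
    refine Integrable.mono' hg
      (((hvm i).mul (hvm j)).aestronglyMeasurable) (Filter.Eventually.of_forall fun ω => ?_)
    rw [Real.norm_eq_abs, abs_mul]
    nlinarith [sq_nonneg (|v ω i| - |v ω j|), sq_abs (v ω i), sq_abs (v ω j),
      abs_nonneg (v ω i), abs_nonneg (v ω j)]
  have hv22 : ∀ i j, Integrable (fun ω => v ω i ^ 2 * v ω j ^ 2) μ := by
    intro i j
    have hg : Integrable (fun ω => v ω i ^ 4 + v ω j ^ 4) μ := (hv4 i).add (hv4 j)
    refine Integrable.mono' hg
      ((((hvm i).pow_const 2).mul ((hvm j).pow_const 2)).aestronglyMeasurable)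
      (Filter.Eventually.of_forall fun ω => ?_)
    rw [Real.norm_eq_abs, abs_of_nonneg (by positivity)]
    nlinarith [sq_nonneg (v ω i ^ 2 - v ω j ^ 2)]
  -- indicator facts
  have hSm : AEMeasurable (fun ω => ∑ l, v ω l ^ 2) μ :=
    Finset.aemeasurable_fun_sum _ fun l _ => (hvm l).pow_const 2
  have hind'm : AEMeasurable ind' μ := by
    have hm : Measurable (fun s : ℝ => if s ≤ α ^ 2 then (0:ℝ) else 1) :=
      Measurable.ite measurableSet_Iic measurable_const measurable_const
    exact hm.comp_aemeasurable hSm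
  have hind'01 : ∀ ω, 0 ≤ ind' ω ∧ ind' ω ≤ 1 := by
    intro ω
    by_cases h : (∑ l, v ω l ^ 2) ≤ α ^ 2 <;> simp [hind'def, h]
  have hind'int : Integrable ind' μ := by
    refine Integrable.mono' (integrable_const (1:ℝ)) hind'm.aestronglyMeasurable
      (Filter.Eventually.of_forall fun ω => ?_)
    rw [Real.norm_eq_abs, abs_of_nonneg (hind'01 ω).1]
    exact (hind'01 ω).2
  have hind'sq : ∀ ω, ind' ω = ind' ω ^ 2 := by
    intro ω
    by_cases h : (∑ l, v ω l ^ 2) ≤ α ^ 2 <;> simp [hind'def, h]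
  -- the generic quadratic form computation
  have quad : ∀ (c : Ω → ℝ), (∀ ω, |c ω| ≤ 1) → AEMeasurable c μ → ∀ u : Fin d → ℝ,
      ∑ i, (∑ j, (∫ ω, c ω * (v ω i * v ω j) ∂μ) * u j) * u i
        = ∫ ω, c ω * (∑ i, u i * v ω i) ^ 2 ∂μ := by
    intro c hc hcm u
    have hci : ∀ i j, Integrable (fun ω => c ω * (v ω i * v ω j)) μ := by
      intro i j
      refine Integrable.mono' (hvij i j).abs
        ((hcm.mul ((hvm i).mul (hvm j))).aestronglyMeasurable)
        (Filter.Eventually.of_forall fun ω => ?_)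
      rw [Real.norm_eq_abs, abs_mul]
      calc |c ω| * |v ω i * v ω j| ≤ 1 * |v ω i * v ω j| :=
            mul_le_mul_of_nonneg_right (hc ω) (abs_nonneg _)
      _ = |v ω i * v ω j| := one_mul _
    have hci2 : ∀ i j, Integrable (fun ω => c ω * ((u i * v ω i) * (u j * v ω j))) μ := by
      intro i j
      exact ((hci i j).const_mul (u j * u i)).congr
        (Filter.Eventually.of_forall fun ω => by ring)
    have hterm : ∀ i j, (∫ ω, c ω * (v ω i * v ω j) ∂μ) * u j * u i
        = ∫ ω, c ω * ((u i * v ω i) * (u j * v ω j)) ∂μ := by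
      intro i j
      have e : (fun ω => c ω * ((u i * v ω i) * (u j * v ω j)))
          = fun ω => (u j * u i) * (c ω * (v ω i * v ω j)) := by funext ω; ring
      rw [e, integral_const_mul]
      ring
    calc ∑ i, (∑ j, (∫ ω, c ω * (v ω i * v ω j) ∂μ) * u j) * u i
        = ∑ i, ∑ j, ∫ ω, c ω * ((u i * v ω i) * (u j * v ω j)) ∂μ := by
          refine Finset.sum_congr rfl fun i _ => ?_
          rw [Finset.sum_mul]
          exact Finset.sum_congr rfl fun j _ => hterm i j
      _ = ∑ i, ∫ ω, ∑ j, c ω * ((u i * v ω i) * (u j * v ω j)) ∂μ := by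
          exact Finset.sum_congr rfl fun i _ =>
            (integral_finset_sum _ fun j _ => hci2 i j).symm
      _ = ∫ ω, ∑ i, ∑ j, c ω * ((u i * v ω i) * (u j * v ω j)) ∂μ :=
          (integral_finset_sum _ fun i _ => integrable_finset_sum _ fun j _ => hci2 i j).symm
      _ = ∫ ω, c ω * (∑ i, u i * v ω i) ^ 2 ∂μ := by
          refine integral_congr_ae (Filter.Eventually.of_forall fun ω => ?_)
          show ∑ i, ∑ j, c ω * (u i * v ω i * (u j * v ω j))
              = c ω * (∑ i, u i * v ω i) ^ 2
          rw [sq, Finset.sum_mul_sum, Finset.mul_sum]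
          refine Finset.sum_congr rfl fun i _ => ?_
          rw [Finset.mul_sum]
  -- matrix entries
  have hMe : ∀ i j : Fin d, (fun ω => if (∑ l, v ω l ^ 2) ≤ α ^ 2 then v ω i * v ω j else 0)
      = fun ω => (1 - ind' ω) * (v ω i * v ω j) := by
    intro i j
    funext ω
    by_cases h : (∑ l, v ω l ^ 2) ≤ α ^ 2 <;> simp [hind'def, h]
  have hMentry : ∀ i j : Fin d,
      (Matrix.of fun i j => ∫ ω, (if (∑ l, v ω l ^ 2) ≤ α ^ 2 then v ω i * v ω j else 0) ∂μ) i j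
        = ∫ ω, (1 - ind' ω) * (v ω i * v ω j) ∂μ := by
    intro i j
    simp only [Matrix.of_apply]
    rw [hMe i j]
  have hSigentry : ∀ i j : Fin d,
      secondMoment μ v i j = ∫ ω, (1:ℝ) * (v ω i * v ω j) ∂μ := by
    intro i j
    simp [secondMoment]
  have hAentry : ∀ i j : Fin d,
      ((Matrix.of fun i j =>
          ∫ ω, (if (∑ l, v ω l ^ 2) ≤ α ^ 2 then v ω i * v ω j else 0) ∂μ) -
        secondMoment μ v) i j
        = (∫ ω, (1 - ind' ω) * (v ω i * v ω j) ∂μ) - ∫ ω, (1:ℝ) * (v ω i * v ω j) ∂μ := by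
    intro i j
    rw [Matrix.sub_apply, hMentry i j, hSigentry i j]
  have hone : ∀ ω : Ω, |(1:ℝ)| ≤ 1 := fun _ => by simp
  have hsub : ∀ ω, |1 - ind' ω| ≤ 1 := by
    intro ω
    rcases hind'01 ω with ⟨h0, h1⟩
    rw [abs_of_nonneg (by linarith)]
    linarith
  have hsubm : AEMeasurable (fun ω => 1 - ind' ω) μ := aemeasurable_const.sub hind'm
  -- quadratic form of the difference matrix
  have hcX2 : ∀ (c : Ω → ℝ), (∀ ω, |c ω| ≤ 1) → AEMeasurable c μ → ∀ u : Fin d → ℝ,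
      Integrable (fun ω => c ω * (∑ i, u i * v ω i) ^ 2) μ := by
    intro c hc hcm u
    refine Integrable.mono' (hX2 u) ((hcm.mul ((hXm u).pow_const 2)).aestronglyMeasurable)
      (Filter.Eventually.of_forall fun ω => ?_)
    rw [Real.norm_eq_abs, abs_mul, abs_of_nonneg (sq_nonneg (∑ i, u i * v ω i))]
    calc |c ω| * (∑ i, u i * v ω i) ^ 2 ≤ 1 * (∑ i, u i * v ω i) ^ 2 :=
          mul_le_mul_of_nonneg_right (hc ω) (sq_nonneg _)
    _ = (∑ i, u i * v ω i) ^ 2 := one_mul _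
  have QA : ∀ u : Fin d → ℝ,
      ∑ i, (∑ j, ((Matrix.of fun i j =>
          ∫ ω, (if (∑ l, v ω l ^ 2) ≤ α ^ 2 then v ω i * v ω j else 0) ∂μ) -
        secondMoment μ v) i j * u j) * u i
        = -∫ ω, ind' ω * (∑ i, u i * v ω i) ^ 2 ∂μ := by
    intro u
    have h1 := quad (fun ω => 1 - ind' ω) hsub hsubm u
    have h2 := quad (fun ω => (1:ℝ)) hone aemeasurable_const u
    have expand : ∑ i, (∑ j, ((Matrix.of fun i j =>
          ∫ ω, (if (∑ l, v ω l ^ 2) ≤ α ^ 2 then v ω i * v ω j else 0) ∂μ) -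
        secondMoment μ v) i j * u j) * u i
        = (∑ i, (∑ j, (∫ ω, (1 - ind' ω) * (v ω i * v ω j) ∂μ) * u j) * u i)
          - ∑ i, (∑ j, (∫ ω, (1:ℝ) * (v ω i * v ω j) ∂μ) * u j) * u i := by
      simp only [hAentry, sub_mul, Finset.sum_sub_distrib]
    rw [expand, h1, h2,
      ← integral_sub (hcX2 _ hsub hsubm u) (hcX2 _ hone aemeasurable_const u), ← integral_neg]
    exact integral_congr_ae (Filter.Eventually.of_forall fun ω => by ring)
  -- symmetry of the difference matrix
  have hAsym : ∀ i j : Fin d,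
      ((Matrix.of fun i j =>
          ∫ ω, (if (∑ l, v ω l ^ 2) ≤ α ^ 2 then v ω i * v ω j else 0) ∂μ) -
        secondMoment μ v) i j
      = ((Matrix.of fun i j =>
          ∫ ω, (if (∑ l, v ω l ^ 2) ≤ α ^ 2 then v ω i * v ω j else 0) ∂μ) -
        secondMoment μ v) j i := by
    intro i j
    rw [hAentry i j, hAentry j i]
    congr 1
    · exact integral_congr_ae (Filter.Eventually.of_forall fun ω => by ring)
    · exact integral_congr_ae (Filter.Eventually.of_forall fun ω => by ring)
  -- trace facts
  have hTr_eq : (secondMoment μ v).trace = ∑ i, ∫ ω, v ω i ^ 2 ∂μ := by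
    refine Finset.sum_congr rfl fun i _ => ?_
    show secondMoment μ v i i = ∫ ω, v ω i ^ 2 ∂μ
    refine integral_congr_ae (Filter.Eventually.of_forall fun ω => ?_)
    show v ω i * v ω i = v ω i ^ 2
    ring
  have hTr0 : 0 ≤ (secondMoment μ v).trace := by
    rw [hTr_eq]
    exact Finset.sum_nonneg fun i _ => integral_nonneg fun ω => sq_nonneg _
  -- fourth-moment bound for linear forms
  have hX4_le : ∀ u : Fin d → ℝ, ∫ ω, (∑ i, u i * v ω i) ^ 4 ∂μ
      ≤ L * (∫ ω, (∑ i, u i * v ω i) ^ 2 ∂μ) ^ 2 := by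
    intro u
    have hf2 : Integrable (fun ω => ((∑ i, u i * v ω i) ^ 4) ^ 2) μ :=
      (hint u).congr (Filter.Eventually.of_forall fun ω => by ring)
    have hg2 : Integrable (fun ω => ((1:ℝ)) ^ 2) μ := integrable_const _
    have hfg : Integrable (fun ω => (∑ i, u i * v ω i) ^ 4 * (1:ℝ)) μ :=
      (hX4 u).congr (Filter.Eventually.of_forall fun ω => by ring)
    have hcs := int_cs μ (fun ω => (∑ i, u i * v ω i) ^ 4) (fun _ => (1:ℝ)) hf2 hg2 hfg
    have e1 : ∫ ω, (∑ i, u i * v ω i) ^ 4 * (1:ℝ) ∂μ = ∫ ω, (∑ i, u i * v ω i) ^ 4 ∂μ :=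
      integral_congr_ae (Filter.Eventually.of_forall fun ω => by ring)
    have e2 : ∫ ω, ((∑ i, u i * v ω i) ^ 4) ^ 2 ∂μ = ∫ ω, (∑ i, u i * v ω i) ^ 8 ∂μ :=
      integral_congr_ae (Filter.Eventually.of_forall fun ω => by ring)
    have e3 : ∫ (_ : Ω), ((1:ℝ)) ^ 2 ∂μ = 1 := by simp
    rw [e1, e2, e3, mul_one] at hcs
    have h8 := hmom u
    have h20 : 0 ≤ ∫ ω, (∑ i, u i * v ω i) ^ 2 ∂μ := integral_nonneg fun ω => sq_nonneg _
    have h40 : 0 ≤ ∫ ω, (∑ i, u i * v ω i) ^ 4 ∂μ := integral_nonneg fun ω => by positivity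
    have hle : (∫ ω, (∑ i, u i * v ω i) ^ 4 ∂μ) ^ 2
        ≤ (L * (∫ ω, (∑ i, u i * v ω i) ^ 2 ∂μ) ^ 2) ^ 2 := by nlinarith [hcs, h8]
    exact le_of_pow_le_pow_left₀ two_ne_zero (by positivity) hle
  have hv4_le : ∀ i, ∫ ω, v ω i ^ 4 ∂μ ≤ L * (∫ ω, v ω i ^ 2 ∂μ) ^ 2 := by
    intro i
    have := hX4_le (Pi.single i 1)
    simpa only [hXe] using this
  -- bound on ∫ S²
  have hSsq_expand : (fun ω => (∑ l, v ω l ^ 2) ^ 2)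
      = fun ω => ∑ i, ∑ j, v ω i ^ 2 * v ω j ^ 2 := by
    funext ω
    rw [sq, Finset.sum_mul_sum]
  have hS2int : Integrable (fun ω => (∑ l, v ω l ^ 2) ^ 2) μ := by
    rw [hSsq_expand]
    exact integrable_finset_sum _ fun i _ => integrable_finset_sum _ fun j _ => hv22 i j
  have hS2_le : ∫ ω, (∑ l, v ω l ^ 2) ^ 2 ∂μ ≤ L * ((secondMoment μ v).trace) ^ 2 := by
    set b : Fin d → ℝ := fun i => Real.sqrt (∫ ω, v ω i ^ 4 ∂μ) with hbdef
    have ha0 : ∀ i, 0 ≤ ∫ ω, v ω i ^ 4 ∂μ := fun i => integral_nonneg fun ω => by positivity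
    have hb0 : ∀ i, 0 ≤ b i := fun i => Real.sqrt_nonneg _
    have hvij_le : ∀ i j, ∫ ω, v ω i ^ 2 * v ω j ^ 2 ∂μ ≤ b i * b j := by
      intro i j
      have hf2 : Integrable (fun ω => (v ω i ^ 2) ^ 2) μ :=
        (hv4 i).congr (Filter.Eventually.of_forall fun ω => by ring)
      have hg2 : Integrable (fun ω => (v ω j ^ 2) ^ 2) μ :=
        (hv4 j).congr (Filter.Eventually.of_forall fun ω => by ring)
      have hcs := int_cs μ (fun ω => v ω i ^ 2) (fun ω => v ω j ^ 2) hf2 hg2 (hv22 i j)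
      have e1 : ∫ ω, (v ω i ^ 2) ^ 2 ∂μ = ∫ ω, v ω i ^ 4 ∂μ :=
        integral_congr_ae (Filter.Eventually.of_forall fun ω => by ring)
      have e2 : ∫ ω, (v ω j ^ 2) ^ 2 ∂μ = ∫ ω, v ω j ^ 4 ∂μ :=
        integral_congr_ae (Filter.Eventually.of_forall fun ω => by ring)
      rw [e1, e2] at hcs
      have h0 : 0 ≤ ∫ ω, v ω i ^ 2 * v ω j ^ 2 ∂μ := integral_nonneg fun ω => by positivity
      have hbb : b i * b j = Real.sqrt ((∫ ω, v ω i ^ 4 ∂μ) * ∫ ω, v ω j ^ 4 ∂μ) := by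
        rw [hbdef, Real.sqrt_mul (ha0 i)]
      rw [hbb]
      rw [Real.le_sqrt h0 (mul_nonneg (ha0 i) (ha0 j))]
      exact hcs
    have hb_le : ∀ i, b i ≤ Real.sqrt L * ∫ ω, v ω i ^ 2 ∂μ := by
      intro i
      have h2i : 0 ≤ ∫ ω, v ω i ^ 2 ∂μ := integral_nonneg fun ω => sq_nonneg _
      calc b i ≤ Real.sqrt (L * (∫ ω, v ω i ^ 2 ∂μ) ^ 2) := Real.sqrt_le_sqrt (hv4_le i)
      _ = Real.sqrt L * ∫ ω, v ω i ^ 2 ∂μ := by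
          rw [Real.sqrt_mul hL.le, Real.sqrt_sq h2i]
    calc ∫ ω, (∑ l, v ω l ^ 2) ^ 2 ∂μ
        = ∑ i, ∑ j, ∫ ω, v ω i ^ 2 * v ω j ^ 2 ∂μ := by
          rw [hSsq_expand, integral_finset_sum _ fun i _ =>
            integrable_finset_sum _ fun j _ => hv22 i j]
          exact Finset.sum_congr rfl fun i _ =>
            integral_finset_sum _ fun j _ => hv22 i j
    _ ≤ ∑ i, ∑ j, b i * b j :=
        Finset.sum_le_sum fun i _ => Finset.sum_le_sum fun j _ => hvij_le i j
    _ = (∑ i, b i) ^ 2 := by rw [sq, Finset.sum_mul_sum]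
    _ ≤ (Real.sqrt L * (secondMoment μ v).trace) ^ 2 := by
        have hsum : ∑ i, b i ≤ Real.sqrt L * (secondMoment μ v).trace := by
          rw [hTr_eq, Finset.mul_sum]
          exact Finset.sum_le_sum fun i _ => hb_le i
        exact pow_le_pow_left₀ (Finset.sum_nonneg fun i _ => hb0 i) hsum 2
    _ = L * ((secondMoment μ v).trace) ^ 2 := by
        rw [mul_pow, Real.sq_sqrt hL.le]
  -- Markov
  have hMarkov : α ^ 4 * (∫ ω, ind' ω ∂μ) ≤ ∫ ω, (∑ l, v ω l ^ 2) ^ 2 ∂μ := by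
    have hmono := integral_mono (hind'int.const_mul (α ^ 4)) hS2int ?_
    · rwa [integral_const_mul] at hmono
    · intro ω
      show α ^ 4 * ind' ω ≤ (∑ l, v ω l ^ 2) ^ 2
      by_cases h : (∑ l, v ω l ^ 2) ≤ α ^ 2
      · simp only [hind'def, h, if_true, mul_zero]
        positivity
      · simp only [hind'def, h, if_false, mul_one]
        push_neg at h
        have hS0 : (0:ℝ) ≤ ∑ l, v ω l ^ 2 := Finset.sum_nonneg fun l _ => sq_nonneg _
        nlinarith [pow_pos hα 2, h]
  -- operator facts
  set A : Matrix (Fin d) (Fin d) ℝ := (Matrix.of fun i j =>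
      ∫ ω, (if (∑ l, v ω l ^ 2) ≤ α ^ 2 then v ω i * v ω j else 0) ∂μ) -
    secondMoment μ v with hAdef
  set T := Matrix.toEuclideanCLM (𝕜 := ℝ) A with hTdef
  have hTsym : ∀ x y : EuclideanSpace ℝ (Fin d), ⟪T x, y⟫ = ⟪x, T y⟫ := by
    intro x y
    rw [hTdef, euclidean_inner_matrix,
      show ⟪x, (Matrix.toEuclideanCLM (𝕜 := ℝ) A) y⟫
        = ⟪(Matrix.toEuclideanCLM (𝕜 := ℝ) A) y, x⟫ from real_inner_comm _ _,
      euclidean_inner_matrix]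
    simp only [Finset.sum_mul]
    rw [Finset.sum_comm]
    refine Finset.sum_congr rfl fun j _ => Finset.sum_congr rfl fun i _ => ?_
    rw [hAsym i j]
    ring
  -- quadratic form bound for the second moment matrix
  have hs_le : ∀ x : EuclideanSpace ℝ (Fin d),
      ∫ ω, (∑ i, x i * v ω i) ^ 2 ∂μ ≤ opNorm (secondMoment μ v) * ‖x‖ ^ 2 := by
    intro x
    have hq := quad (fun _ => (1:ℝ)) hone aemeasurable_const (fun i => x i)
    have hq2 : ∑ i, (∑ j, secondMoment μ v i j * x j) * x i
        = ∫ ω, (∑ i, x i * v ω i) ^ 2 ∂μ := by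
      calc ∑ i, (∑ j, secondMoment μ v i j * x j) * x i
          = ∑ i, (∑ j, (∫ ω, (1:ℝ) * (v ω i * v ω j) ∂μ) * x j) * x i := by
            simp only [hSigentry]
        _ = ∫ ω, (1:ℝ) * (∑ i, x i * v ω i) ^ 2 ∂μ := hq
        _ = ∫ ω, (∑ i, x i * v ω i) ^ 2 ∂μ :=
            integral_congr_ae (Filter.Eventually.of_forall fun ω => one_mul _)
    have hip := euclidean_inner_matrix (secondMoment μ v) x x
    have hbound : ⟪(Matrix.toEuclideanCLM (𝕜 := ℝ) (secondMoment μ v)) x, x⟫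
        ≤ opNorm (secondMoment μ v) * ‖x‖ ^ 2 := by
      calc ⟪(Matrix.toEuclideanCLM (𝕜 := ℝ) (secondMoment μ v)) x, x⟫
          ≤ ‖(Matrix.toEuclideanCLM (𝕜 := ℝ) (secondMoment μ v)) x‖ * ‖x‖ :=
            real_inner_le_norm _ _
      _ ≤ ‖Matrix.toEuclideanCLM (𝕜 := ℝ) (secondMoment μ v)‖ * ‖x‖ * ‖x‖ :=
            mul_le_mul_of_nonneg_right
              ((Matrix.toEuclideanCLM (𝕜 := ℝ) (secondMoment μ v)).le_opNorm x)
              (norm_nonneg x)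
      _ = opNorm (secondMoment μ v) * ‖x‖ ^ 2 := by rw [opNorm]; ring
    rw [hip] at hbound
    calc ∫ ω, (∑ i, x i * v ω i) ^ 2 ∂μ
        = ∑ i, (∑ j, secondMoment μ v i j * x j) * x i := hq2.symm
    _ ≤ opNorm (secondMoment μ v) * ‖x‖ ^ 2 := hbound
  -- final quadratic-form bound for A
  have hC0 : 0 ≤ L * opNorm (secondMoment μ v) * (secondMoment μ v).trace / α ^ 2 := by
    have : (0:ℝ) ≤ opNorm (secondMoment μ v) := norm_nonneg _
    positivity
  have hquad : ∀ x : EuclideanSpace ℝ (Fin d), |⟪T x, x⟫|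
      ≤ (L * opNorm (secondMoment μ v) * (secondMoment μ v).trace / α ^ 2) * ‖x‖ ^ 2 := by
    intro x
    have hform : ⟪T x, x⟫ = -∫ ω, ind' ω * (∑ i, x i * v ω i) ^ 2 ∂μ := by
      rw [hTdef, euclidean_inner_matrix]
      exact QA (fun i => x i)
    have hB0 : 0 ≤ ∫ ω, ind' ω * (∑ i, x i * v ω i) ^ 2 ∂μ :=
      integral_nonneg fun ω => mul_nonneg (hind'01 ω).1 (sq_nonneg _)
    rw [hform, abs_neg, abs_of_nonneg hB0]
    -- Cauchy–Schwarz on the truncated quadratic form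
    have hf2 : Integrable (fun ω => ind' ω ^ 2) μ :=
      hind'int.congr (Filter.Eventually.of_forall fun ω => hind'sq ω)
    have hg2 : Integrable (fun ω => ((∑ i, x i * v ω i) ^ 2) ^ 2) μ :=
      (hX4 (fun i => x i)).congr (Filter.Eventually.of_forall fun ω => by ring)
    have hfg : Integrable (fun ω => ind' ω * (∑ i, x i * v ω i) ^ 2) μ :=
      hcX2 ind' (fun ω => by rw [abs_of_nonneg (hind'01 ω).1]; exact (hind'01 ω).2)
        hind'm (fun i => x i)
    have hcs := int_cs μ ind' (fun ω => (∑ i, x i * v ω i) ^ 2) hf2 hg2 hfg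
    have e1 : ∫ ω, ind' ω ^ 2 ∂μ = ∫ ω, ind' ω ∂μ :=
      integral_congr_ae (Filter.Eventually.of_forall fun ω => (hind'sq ω).symm)
    have e2 : ∫ ω, ((∑ i, x i * v ω i) ^ 2) ^ 2 ∂μ = ∫ ω, (∑ i, x i * v ω i) ^ 4 ∂μ :=
      integral_congr_ae (Filter.Eventually.of_forall fun ω => by ring)
    rw [e1, e2] at hcs
    -- assemble
    have hP0 : 0 ≤ ∫ ω, ind' ω ∂μ := integral_nonneg fun ω => (hind'01 ω).1
    have hs0 : 0 ≤ ∫ ω, (∑ i, x i * v ω i) ^ 2 ∂μ := integral_nonneg fun ω => sq_nonneg _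
    have hI40 : 0 ≤ ∫ ω, (∑ i, x i * v ω i) ^ 4 ∂μ := integral_nonneg fun ω => by positivity
    have hI4le := hX4_le (fun i => x i)
    have hsle := hs_le x
    have hN0 : (0:ℝ) ≤ opNorm (secondMoment μ v) := norm_nonneg _
    have hPle : ∫ ω, ind' ω ∂μ ≤ L * ((secondMoment μ v).trace) ^ 2 / α ^ 4 := by
      rw [le_div_iff₀ (by positivity)]
      calc (∫ ω, ind' ω ∂μ) * α ^ 4 = α ^ 4 * ∫ ω, ind' ω ∂μ := by ring
      _ ≤ ∫ ω, (∑ l, v ω l ^ 2) ^ 2 ∂μ := hMarkov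
      _ ≤ L * ((secondMoment μ v).trace) ^ 2 := hS2_le
    have hfin : (∫ ω, ind' ω * (∑ i, x i * v ω i) ^ 2 ∂μ) ^ 2
        ≤ ((L * opNorm (secondMoment μ v) * (secondMoment μ v).trace / α ^ 2) * ‖x‖ ^ 2) ^ 2 := by
      have c2 : (∫ ω, (∑ i, x i * v ω i) ^ 2 ∂μ) ^ 2
          ≤ (opNorm (secondMoment μ v) * ‖x‖ ^ 2) ^ 2 := pow_le_pow_left₀ hs0 hsle 2
      have c1 : (∫ ω, ind' ω * (∑ i, x i * v ω i) ^ 2 ∂μ) ^ 2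
          ≤ (∫ ω, ind' ω ∂μ) * (L * (∫ ω, (∑ i, x i * v ω i) ^ 2 ∂μ) ^ 2) := by
        refine le_trans hcs (mul_le_mul_of_nonneg_left hI4le hP0)
      have c3 : (∫ ω, ind' ω * (∑ i, x i * v ω i) ^ 2 ∂μ) ^ 2
          ≤ (∫ ω, ind' ω ∂μ) * (L * (opNorm (secondMoment μ v) * ‖x‖ ^ 2) ^ 2) := by
        refine le_trans c1 (mul_le_mul_of_nonneg_left ?_ hP0)
        exact mul_le_mul_of_nonneg_left c2 hL.le
      calc (∫ ω, ind' ω * (∑ i, x i * v ω i) ^ 2 ∂μ) ^ 2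
          ≤ (∫ ω, ind' ω ∂μ) * (L * (opNorm (secondMoment μ v) * ‖x‖ ^ 2) ^ 2) := c3
      _ ≤ (L * ((secondMoment μ v).trace) ^ 2 / α ^ 4)
            * (L * (opNorm (secondMoment μ v) * ‖x‖ ^ 2) ^ 2) :=
          mul_le_mul_of_nonneg_right hPle (by positivity)
      _ = ((L * opNorm (secondMoment μ v) * (secondMoment μ v).trace / α ^ 2) * ‖x‖ ^ 2) ^ 2 := by
          field_simp
    refine le_of_pow_le_pow_left₀ two_ne_zero ?_ hfin
    positivity
  show ‖T‖ ≤ L * opNorm (secondMoment μ v) * (secondMoment μ v).trace / α ^ 2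
  exact symm_norm_le T hTsym hC0 hquad
end

section
/- There is a universal constant c > 0 such that for any even t ∈ N with t·λ·m^{1/2}/d^{1/4} ≤ c, the sum over multi-indices α of total degree exactly t of the squared planted Hermite coefficients in the single-spike block mixture model is at most (C λ t / d)^t · d^{3t/4} · m^{t/2} for some universal constant C; summing over degrees 2,4,…,t shows Σ_{0 < |α| ≤ t} (E[H_α(y)])² ≤ O(t λ m^{1/2} / d^{1/4}). -/
open scoped Nat

/-- The planted Hermite coefficient `E[H_α(y)]` of the single-spike block mixture:
nonzero only on 'super-even' multi-indices (each block degree divisible by 4, each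
sample degree even, each coordinate-row degree even), where it equals
`(λ/d)^{|α|/2} ∏_j (|α_j| − 1)‼`.  Samples are indexed by `Fin d × Fin m`
(block, position). -/
noncomputable def spikeCoef (d m : ℕ) (lam : ℝ) (α : Fin d × Fin m → Fin d → ℕ) : ℝ :=
  if (∀ b : Fin d, 4 ∣ ∑ l : Fin m, ∑ i, α (b, l) i) ∧
      (∀ j : Fin d × Fin m, Even (∑ i, α j i)) ∧
      (∀ i : Fin d, Even (∑ j, α j i)) then
    (lam / d) ^ ((∑ j, ∑ i, α j i) / 2) *
      ∏ j, (Nat.doubleFactorial (∑ i, α j i - 1) : ℝ)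
  else 0

open Finset

section counting
variable {ι : Type*} [Fintype ι] [DecidableEq ι]

/-- Functions supported on `s` with total sum `k`. -/
def SFin (s : Finset ι) (k : ℕ) : Finset (ι → ℕ) :=
  (Fintype.piFinset fun _ : ι => Finset.range (k + 1)).filter
    fun r => (∑ i, r i) = k ∧ ∀ i ∉ s, r i = 0

lemma mem_SFin {s : Finset ι} {k : ℕ} {r : ι → ℕ} :
    r ∈ SFin s k ↔ (∑ i, r i) = k ∧ ∀ i ∉ s, r i = 0 := by
  unfold SFin
  rw [Finset.mem_filter, Fintype.mem_piFinset]
  constructor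
  · tauto
  · rintro ⟨h1, h2⟩
    refine ⟨fun a => ?_, h1, h2⟩
    rw [Finset.mem_range, Nat.lt_succ_iff, ← h1]
    exact Finset.single_le_sum (fun i _ => Nat.zero_le _) (Finset.mem_univ a)

lemma SFin_card_insert_le {s : Finset ι} {x : ι} (hx : x ∉ s) (k : ℕ) :
    (SFin (insert x s) k).card ≤ ∑ j ∈ Finset.range (k + 1), (SFin s (k - j)).card := by
  rw [← Finset.card_sigma]
  apply Finset.card_le_card_of_injOn
    (fun r => (⟨r x, Function.update r x 0⟩ : (_ : ℕ) × (ι → ℕ)))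
  · intro r hr
    rw [Finset.mem_coe, mem_SFin] at hr
    have hxk : r x ≤ k := by
      rw [← hr.1]
      exact Finset.single_le_sum (fun i _ => Nat.zero_le _) (Finset.mem_univ x)
    have hsum : ∑ i, Function.update r x 0 i = k - r x := by
      have h1 : ∑ i, Function.update r x 0 i
          = 0 + ∑ i ∈ Finset.univ.erase x, r i := by
        rw [← Finset.sdiff_singleton_eq_erase, ← Finset.sum_update_of_mem (Finset.mem_univ x)]
      have h2 : r x + ∑ i ∈ Finset.univ.erase x, r i = k := by
        rw [Finset.add_sum_erase _ _ (Finset.mem_univ x)]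
        exact hr.1
      omega
    refine Finset.mem_sigma.mpr ⟨Finset.mem_range.mpr (Nat.lt_succ_of_le hxk), ?_⟩
    rw [mem_SFin]
    refine ⟨hsum, fun i hi => ?_⟩
    show Function.update r x 0 i = 0
    by_cases h : i = x
    · subst h; simp
    · rw [Function.update_of_ne h]
      exact hr.2 i (by simp [Finset.mem_insert, h, hi])
  · intro r1 h1 r2 h2 heq
    rw [Sigma.ext_iff] at heq
    obtain ⟨hfst, hsnd⟩ := heq
    rw [heq_iff_eq] at hsnd
    dsimp only at hfst hsnd
    funext i
    by_cases h : i = x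
    · subst h; exact hfst
    · have := congrFun hsnd i
      rwa [Function.update_of_ne h, Function.update_of_ne h] at this

lemma SFin_empty_card_le_one (k : ℕ) : (SFin (∅ : Finset ι) k).card ≤ 1 := by
  refine Finset.card_le_one.mpr (fun a ha b hb => ?_)
  rw [mem_SFin] at ha hb
  funext i
  rw [ha.2 i (Finset.notMem_empty i), hb.2 i (Finset.notMem_empty i)]

lemma SFin_empty_pos (k : ℕ) (hk : 0 < k) : (SFin (∅ : Finset ι) k) = ∅ := by
  refine Finset.eq_empty_of_forall_notMem (fun r hr => ?_)
  rw [mem_SFin] at hr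
  have : ∑ i, r i = 0 := Finset.sum_eq_zero (fun i _ => hr.2 i (Finset.notMem_empty i))
  omega

lemma sum_pow_le_pow_succ (n k : ℕ) :
    ∑ j ∈ Finset.range (k + 1), n ^ j ≤ (n + 1) ^ k := by
  calc ∑ j ∈ Finset.range (k + 1), n ^ j
      ≤ ∑ j ∈ Finset.range (k + 1), n ^ j * 1 ^ (k - j) * k.choose j := by
        apply Finset.sum_le_sum
        intro i hi
        have : 1 ≤ k.choose i := Nat.choose_pos (Nat.lt_succ_iff.mp (Finset.mem_range.mp hi))
        calc n ^ i = n ^ i * 1 * 1 := by ring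
          _ ≤ n ^ i * 1 ^ (k - i) * k.choose i := by
              rw [one_pow]
              exact Nat.mul_le_mul (le_refl _) this
    _ = (n + 1) ^ k := by rw [add_pow]; simp
lemma SFin_card_le_pow (s : Finset ι) (k : ℕ) : (SFin s k).card ≤ s.card ^ k := by
  induction s using Finset.induction generalizing k with
  | empty =>
    cases k with
    | zero => simpa using SFin_empty_card_le_one (ι := ι) 0
    | succ n => simp [SFin_empty_pos (ι := ι) (n + 1) (Nat.succ_pos n)]
  | @insert x s hx ih =>
    calc (SFin (insert x s) k).card
        ≤ ∑ j ∈ Finset.range (k + 1), (SFin s (k - j)).card := SFin_card_insert_le hx k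
      _ ≤ ∑ j ∈ Finset.range (k + 1), s.card ^ (k - j) :=
          Finset.sum_le_sum (fun j _ => ih (k - j))
      _ = ∑ j ∈ Finset.range (k + 1), s.card ^ j := by
          rw [← Finset.sum_range_reflect]
          apply Finset.sum_congr rfl
          intro j hj
          rw [Finset.mem_range] at hj
          congr 1
          omega
      _ ≤ (s.card + 1) ^ k := sum_pow_le_pow_succ _ _
      _ = (insert x s).card ^ k := by rw [Finset.card_insert_of_notMem hx]

lemma hockey_stick (c : ℕ) : ∀ k : ℕ, ∑ j ∈ Finset.range (k + 1), (c + j).choose j = (c + k + 1).choose k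
  | 0 => by simp
  | (k + 1) => by
    rw [Finset.sum_range_succ, hockey_stick c k]
    exact (Nat.choose_succ_succ (c + k + 1) k).symm

lemma SFin_card_le_choose (s : Finset ι) (k : ℕ) : (SFin s k).card ≤ (s.card + k).choose k := by
  induction s using Finset.induction generalizing k with
  | empty =>
    simpa using (SFin_empty_card_le_one (ι := ι) k).trans
      (by simpa using Nat.choose_pos (le_refl k))
  | @insert x s hx ih =>
    calc (SFin (insert x s) k).card
        ≤ ∑ j ∈ Finset.range (k + 1), (SFin s (k - j)).card := SFin_card_insert_le hx k
      _ ≤ ∑ j ∈ Finset.range (k + 1), (s.card + (k - j)).choose (k - j) :=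
          Finset.sum_le_sum (fun j _ => ih (k - j))
      _ = ∑ j ∈ Finset.range (k + 1), (s.card + j).choose j := by
          rw [← Finset.sum_range_reflect]
          apply Finset.sum_congr rfl
          intro j hj
          rw [Finset.mem_range] at hj
          congr 2 <;> omega
      _ = (s.card + k + 1).choose k := hockey_stick s.card k
      _ = ((insert x s).card + k).choose k := by
          rw [Finset.card_insert_of_notMem hx]
          congr 1
          ring

end counting

lemma dfac_le_succ : ∀ n : ℕ, n‼ ≤ (n + 1)‼
  | 0 => by simp [Nat.doubleFactorial]
  | 1 => by simp [Nat.doubleFactorial]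
  | (n + 2) => by
    rw [Nat.doubleFactorial_add_two, show n + 2 + 1 = n + 1 + 2 by ring,
      Nat.doubleFactorial_add_two]
    exact Nat.mul_le_mul (by omega) (dfac_le_succ n)

lemma dfac_sq_le_factorial : ∀ k : ℕ, ((k - 1)‼) ^ 2 ≤ k !
  | 0 => by simp [Nat.doubleFactorial]
  | (k + 1) => by
    rw [Nat.factorial_eq_mul_doubleFactorial, pow_two]
    simp only [Nat.add_sub_cancel]
    exact Nat.mul_le_mul (dfac_le_succ k) (le_refl _)
section main

abbrev rowS {d m : ℕ} (α : Fin d × Fin m → Fin d → ℕ) (j : Fin d × Fin m) : ℕ := ∑ i, α j i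

abbrev totS {d m : ℕ} (α : Fin d × Fin m → Fin d → ℕ) : ℕ := ∑ j, rowS α j

abbrev SEp {d m : ℕ} (α : Fin d × Fin m → Fin d → ℕ) : Prop :=
  (∀ b : Fin d, 4 ∣ ∑ l : Fin m, rowS α (b, l)) ∧
    (∀ j : Fin d × Fin m, Even (rowS α j)) ∧ (∀ i : Fin d, Even (∑ j, α j i))

def AF (d m T : ℕ) : Finset (Fin d × Fin m → Fin d → ℕ) :=
  Fintype.piFinset fun _ => Fintype.piFinset fun _ => Finset.range (T + 1)

def Sset (d m T s : ℕ) : Finset (Fin d × Fin m → Fin d → ℕ) :=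
  (AF d m T).filter fun α => totS α = s ∧ SEp α

lemma SEp_dvd_totS {d m : ℕ} {α : Fin d × Fin m → Fin d → ℕ} (h : SEp α) : 4 ∣ totS α := by
  rw [show totS α = ∑ b : Fin d, ∑ l : Fin m, rowS α (b, l) from Fintype.sum_prod_type _]
  exact Finset.dvd_sum fun b _ => h.1 b

lemma Sset_eq_empty {d m T s : ℕ} (h : ¬ 4 ∣ s) : Sset d m T s = ∅ := by
  refine Finset.eq_empty_of_forall_notMem fun α hα => ?_
  rw [Sset, Finset.mem_filter] at hα
  exact h (hα.2.1 ▸ SEp_dvd_totS hα.2.2)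

def Afin (d m s : ℕ) : Finset (Fin d × Fin m → ℕ) :=
  (SFin Finset.univ s).filter fun a =>
    (∀ j, Even (a j)) ∧ ∀ b : Fin d, 4 ∣ ∑ l : Fin m, a (b, l)

def Cfin (d s : ℕ) : Finset (Fin d → ℕ) :=
  (SFin Finset.univ s).filter fun c => ∀ i, Even (c i)

lemma Afin_card_le (d m s : ℕ) (hs : 4 ∣ s) : (Afin d m s).card ≤ d ^ (s / 4) * m ^ (s / 2) := by
  have h24 : 2 * (s / 4) = s / 2 := by omega
  classical
  have hle : (Afin d m s).card ≤
      ((SFin (Finset.univ : Finset (Fin d)) (s / 4)).sigma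
        (fun u => Fintype.piFinset fun b => SFin (Finset.univ : Finset (Fin m)) (2 * u b))).card := by
    apply Finset.card_le_card_of_injOn
      (fun a => ⟨fun b => (∑ l, a (b, l)) / 4, fun b l => a (b, l) / 2⟩)
    · intro a ha
      obtain ⟨haS, hev, hblk⟩ := Finset.mem_filter.mp ha
      rw [mem_SFin] at haS
      have hsum' : ∑ b : Fin d, ∑ l : Fin m, a (b, l) = s := by
        rw [← Fintype.sum_prod_type]; exact haS.1
      refine Finset.mem_sigma.mpr ⟨?_, ?_⟩
      · rw [mem_SFin]
        refine ⟨?_, fun i hi => absurd (Finset.mem_univ i) hi⟩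
        dsimp only
        have h4 : 4 * ∑ b : Fin d, (∑ l : Fin m, a (b, l)) / 4 = s := by
          rw [Finset.mul_sum, Finset.sum_congr rfl fun b _ => Nat.mul_div_cancel' (hblk b)]
          exact hsum'
        omega
      · rw [Fintype.mem_piFinset]
        intro b
        rw [mem_SFin]
        refine ⟨?_, fun l hl => absurd (Finset.mem_univ l) hl⟩
        dsimp only
        have h2 : 2 * ∑ l : Fin m, a (b, l) / 2 = ∑ l : Fin m, a (b, l) := by
          rw [Finset.mul_sum]
          exact Finset.sum_congr rfl fun l _ => Nat.mul_div_cancel' (hev (b, l)).two_dvd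
        have h4 := hblk b
        omega
    · intro a1 h1 a2 h2 heq
      rw [Sigma.ext_iff] at heq
      obtain ⟨_, hsnd⟩ := heq
      rw [heq_iff_eq] at hsnd
      dsimp only at hsnd
      have hev1 := (Finset.mem_filter.mp h1).2.1
      have hev2 := (Finset.mem_filter.mp h2).2.1
      funext j
      obtain ⟨b, l⟩ := j
      have e1 : 2 * (a1 (b, l) / 2) = a1 (b, l) := Nat.mul_div_cancel' (hev1 (b, l)).two_dvd
      have e2 : 2 * (a2 (b, l) / 2) = a2 (b, l) := Nat.mul_div_cancel' (hev2 (b, l)).two_dvd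
      have := congrFun (congrFun hsnd b) l
      omega
  refine hle.trans ?_
  rw [Finset.card_sigma]
  calc ∑ u ∈ SFin (Finset.univ : Finset (Fin d)) (s / 4),
        (Fintype.piFinset fun b => SFin (Finset.univ : Finset (Fin m)) (2 * u b)).card
      ≤ ∑ _u ∈ SFin (Finset.univ : Finset (Fin d)) (s / 4), m ^ (2 * (s / 4)) := by
        apply Finset.sum_le_sum
        intro u hu
        rw [Fintype.card_piFinset]
        calc ∏ b, (SFin (Finset.univ : Finset (Fin m)) (2 * u b)).card
            ≤ ∏ b, m ^ (2 * u b) := Finset.prod_le_prod' fun b _ => by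
              simpa [Finset.card_univ] using
                SFin_card_le_pow (Finset.univ : Finset (Fin m)) (2 * u b)
          _ = m ^ (∑ b, 2 * u b) := Finset.prod_pow_eq_pow_sum _ _ _
          _ = m ^ (2 * (s / 4)) := by
              congr 1
              rw [← Finset.mul_sum, (mem_SFin.mp hu).1]
    _ ≤ d ^ (s / 4) * m ^ (s / 2) := by
        rw [Finset.sum_const, smul_eq_mul, h24]
        have hU : (SFin (Finset.univ : Finset (Fin d)) (s / 4)).card ≤ d ^ (s / 4) := by
          simpa [Finset.card_univ] using SFin_card_le_pow (Finset.univ : Finset (Fin d)) (s / 4)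
        exact Nat.mul_le_mul hU (le_refl _)

lemma Cfin_card_le (d s : ℕ) : (Cfin d s).card ≤ d ^ (s / 2) := by
  classical
  have hle : (Cfin d s).card ≤ (SFin (Finset.univ : Finset (Fin d)) (s / 2)).card := by
    apply Finset.card_le_card_of_injOn (fun c i => c i / 2)
    · intro c hc
      obtain ⟨hcS, hev⟩ := Finset.mem_filter.mp hc
      rw [mem_SFin] at hcS
      rw [Finset.mem_coe, mem_SFin]; dsimp only
      refine ⟨?_, fun i hi => absurd (Finset.mem_univ i) hi⟩
      have h2 : 2 * ∑ i, c i / 2 = s := by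
        rw [Finset.mul_sum, Finset.sum_congr rfl fun i _ => Nat.mul_div_cancel' (hev i).two_dvd]
        exact hcS.1
      omega
    · intro c1 h1 c2 h2 heq
      have hev1 := (Finset.mem_filter.mp h1).2
      have hev2 := (Finset.mem_filter.mp h2).2
      funext i
      have hi := congrFun heq i
      have e1 : 2 * (c1 i / 2) = c1 i := Nat.mul_div_cancel' (hev1 i).two_dvd
      have e2 : 2 * (c2 i / 2) = c2 i := Nat.mul_div_cancel' (hev2 i).two_dvd
      dsimp only at hi
      omega
  exact hle.trans (by
    simpa [Finset.card_univ] using SFin_card_le_pow (Finset.univ : Finset (Fin d)) (s / 2))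
lemma key_count (d m T s : ℕ) (hs : 4 ∣ s) :
    (∑ α ∈ Sset d m T s, (∏ j, (rowS α j - 1)‼) ^ 2)
      ≤ (2 * s) ^ s * d ^ (3 * (s / 4)) * m ^ (s / 2) := by
  classical
  set SS := Sset d m T s with hSS
  have hmem : ∀ α ∈ SS, totS α = s ∧ SEp α := fun α hα => (Finset.mem_filter.mp hα).2
  set ph : (Fin d × Fin m → Fin d → ℕ) → ((Fin d × Fin m → ℕ) × (Fin d → ℕ)) :=
    fun α => (fun j => rowS α j, fun i => ∑ j, α j i) with hphdef
  have hmaps : ∀ α ∈ SS, ph α ∈ SS.image ph := fun α hα => Finset.mem_image_of_mem ph hα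
  rw [← Finset.sum_fiberwise_of_maps_to hmaps (fun α => (∏ j, (rowS α j - 1)‼) ^ 2)]
  have hper : ∀ p ∈ SS.image ph,
      (∑ α ∈ SS.filter (fun α => ph α = p), (∏ j, (rowS α j - 1)‼) ^ 2) ≤ (2 * s) ^ s := by
    intro p hp
    obtain ⟨α₀, hα₀, hphα₀⟩ := Finset.mem_image.mp hp
    obtain ⟨htot₀, hSE₀⟩ := hmem α₀ hα₀
    have hp1 : ∀ j, p.1 j = rowS α₀ j := fun j => by rw [← hphα₀]
    have hp2 : ∀ i, p.2 i = ∑ j, α₀ j i := fun i => by rw [← hphα₀]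
    have hsuma : ∑ j, p.1 j = s := by
      rw [Finset.sum_congr rfl fun j _ => hp1 j]
      exact htot₀
    have ha_le : ∀ j, p.1 j ≤ s := fun j => by
      rw [← hsuma]
      exact Finset.single_le_sum (fun _ _ => Nat.zero_le _) (Finset.mem_univ j)
    have hsumc : ∑ i, p.2 i = s := by
      rw [Finset.sum_congr rfl fun i _ => hp2 i, Finset.sum_comm]
      exact htot₀
    set sc : Finset (Fin d) := Finset.univ.filter (fun i => p.2 i ≠ 0) with hscdef
    have hsc_card : sc.card ≤ s := by
      calc sc.card = ∑ _i ∈ sc, 1 := by rw [Finset.sum_const, smul_eq_mul, mul_one]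
        _ ≤ ∑ i ∈ sc, p.2 i := Finset.sum_le_sum fun i hi =>
            Nat.one_le_iff_ne_zero.mpr (Finset.mem_filter.mp hi).2
        _ ≤ ∑ i, p.2 i := Finset.sum_le_sum_of_subset (Finset.filter_subset _ _)
        _ = s := hsumc
    have hconst : ∀ α ∈ SS.filter (fun α => ph α = p),
        (∏ j, (rowS α j - 1)‼) ^ 2 = (∏ j, (p.1 j - 1)‼) ^ 2 := by
      intro α hα
      have hphα := (Finset.mem_filter.mp hα).2
      have hrow : ∀ j, rowS α j = p.1 j := fun j => by rw [← hphα]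
      exact congrArg (· ^ 2) (Finset.prod_congr rfl fun j _ => by rw [hrow j])
    rw [Finset.sum_congr rfl hconst, Finset.sum_const, smul_eq_mul]
    have hcard : (SS.filter (fun α => ph α = p)).card
        ≤ ∏ j, (SFin sc (p.1 j)).card := by
      rw [← Fintype.card_piFinset]
      apply Finset.card_le_card_of_injOn (fun α => α)
      · intro α hα
        obtain ⟨hαS, hphα⟩ := Finset.mem_filter.mp hα
        rw [Finset.mem_coe, Fintype.mem_piFinset]
        intro j
        rw [mem_SFin]
        constructor
        · show (∑ i, α j i) = p.1 j
          rw [← hphα]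
        · intro i hi
          have hci : p.2 i = 0 := by
            by_contra hne
            exact hi (Finset.mem_filter.mpr ⟨Finset.mem_univ i, hne⟩)
          have hzero : ∑ j', α j' i = 0 := by
            rw [← hphα] at hci
            exact hci
          exact (Finset.sum_eq_zero_iff.mp hzero) j (Finset.mem_univ j)
      · exact fun a _ b _ h => h
    have hjw : ∀ j, (SFin sc (p.1 j)).card * ((p.1 j - 1)‼) ^ 2 ≤ (2 * s) ^ (p.1 j) := by
      intro j
      rcases Nat.eq_zero_or_pos (p.1 j) with h0 | hpos
      · rw [h0]
        have hc1 : (SFin sc 0).card ≤ 1 := by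
          refine Finset.card_le_one.mpr (fun a ha b hb => ?_)
          rw [mem_SFin] at ha hb
          funext i
          have ha' : a i = 0 := by
            have := Finset.sum_eq_zero_iff.mp ha.1
            exact this i (Finset.mem_univ i)
          have hb' : b i = 0 := by
            have := Finset.sum_eq_zero_iff.mp hb.1
            exact this i (Finset.mem_univ i)
          rw [ha', hb']
        calc (SFin sc 0).card * ((0 - 1)‼) ^ 2 ≤ 1 * 1 := by
              apply Nat.mul_le_mul hc1
              simp [Nat.doubleFactorial]
          _ ≤ (2 * s) ^ (0 : ℕ) := by simp
      · calc (SFin sc (p.1 j)).card * ((p.1 j - 1)‼) ^ 2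
            ≤ (sc.card + p.1 j).choose (p.1 j) * (p.1 j)! :=
              Nat.mul_le_mul (SFin_card_le_choose sc (p.1 j)) (dfac_sq_le_factorial (p.1 j))
          _ = (sc.card + p.1 j).descFactorial (p.1 j) := by
              rw [Nat.choose_eq_descFactorial_div_factorial,
                Nat.div_mul_cancel (Nat.factorial_dvd_descFactorial _ _)]
          _ ≤ (sc.card + p.1 j) ^ (p.1 j) := Nat.descFactorial_le_pow _ _
          _ ≤ (2 * s) ^ (p.1 j) := by
              apply Nat.pow_le_pow_left
              have h1 := hsc_card
              have h2 := ha_le j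
              omega
    calc (SS.filter (fun α => ph α = p)).card * (∏ j, (p.1 j - 1)‼) ^ 2
        = (SS.filter (fun α => ph α = p)).card * ∏ j, ((p.1 j - 1)‼) ^ 2 := by
          rw [Finset.prod_pow]
      _ ≤ (∏ j, (SFin sc (p.1 j)).card) * ∏ j, ((p.1 j - 1)‼) ^ 2 :=
          Nat.mul_le_mul hcard (le_refl _)
      _ = ∏ j, (SFin sc (p.1 j)).card * ((p.1 j - 1)‼) ^ 2 := by
          rw [← Finset.prod_mul_distrib]
      _ ≤ ∏ j, (2 * s) ^ (p.1 j) := Finset.prod_le_prod' fun j _ => hjw j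
      _ = (2 * s) ^ (∑ j, p.1 j) := Finset.prod_pow_eq_pow_sum _ _ _
      _ = (2 * s) ^ s := by rw [hsuma]
  have hsub : SS.image ph ⊆ (Afin d m s) ×ˢ (Cfin d s) := by
    intro p hp
    obtain ⟨α₀, hα₀, hphα₀⟩ := Finset.mem_image.mp hp
    obtain ⟨htot₀, hSE₀⟩ := hmem α₀ hα₀
    have hp1 : ∀ j, p.1 j = rowS α₀ j := fun j => by rw [← hphα₀]
    have hp2 : ∀ i, p.2 i = ∑ j, α₀ j i := fun i => by rw [← hphα₀]
    have hsuma : ∑ j, p.1 j = s := by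
      rw [Finset.sum_congr rfl fun j _ => hp1 j]
      exact htot₀
    have hsumc : ∑ i, p.2 i = s := by
      rw [Finset.sum_congr rfl fun i _ => hp2 i, Finset.sum_comm]
      exact htot₀
    rw [Finset.mem_product]
    constructor
    · rw [Afin, Finset.mem_filter, mem_SFin]
      refine ⟨⟨hsuma, fun j hj => absurd (Finset.mem_univ j) hj⟩, fun j => ?_, fun b => ?_⟩
      · rw [hp1 j]; exact hSE₀.2.1 j
      · rw [Finset.sum_congr rfl fun l _ => hp1 (b, l)]
        exact hSE₀.1 b
    · rw [Cfin, Finset.mem_filter, mem_SFin]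
      refine ⟨⟨hsumc, fun i hi => absurd (Finset.mem_univ i) hi⟩, fun i => ?_⟩
      rw [hp2 i]
      exact hSE₀.2.2 i
  calc ∑ p ∈ SS.image ph, ∑ α ∈ SS.filter (fun α => ph α = p), (∏ j, (rowS α j - 1)‼) ^ 2
      ≤ ∑ _p ∈ SS.image ph, (2 * s) ^ s := Finset.sum_le_sum hper
    _ = (SS.image ph).card * (2 * s) ^ s := by rw [Finset.sum_const, smul_eq_mul]
    _ ≤ ((Afin d m s) ×ˢ (Cfin d s)).card * (2 * s) ^ s :=
        Nat.mul_le_mul (Finset.card_le_card hsub) (le_refl _)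
    _ = ((Afin d m s).card * (Cfin d s).card) * (2 * s) ^ s := by rw [Finset.card_product]
    _ ≤ ((d ^ (s / 4) * m ^ (s / 2)) * d ^ (s / 2)) * (2 * s) ^ s :=
        Nat.mul_le_mul (Nat.mul_le_mul (Afin_card_le d m s hs) (Cfin_card_le d s)) (le_refl _)
    _ = (2 * s) ^ s * d ^ (3 * (s / 4)) * m ^ (s / 2) := by
        rw [show 3 * (s / 4) = s / 4 + s / 2 from by omega, pow_add]
        ring
lemma notin_AF {d m T : ℕ} {α : Fin d × Fin m → Fin d → ℕ} (h : α ∉ AF d m T) :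
    T < totS α := by
  rw [AF, Fintype.mem_piFinset] at h
  push_neg at h
  obtain ⟨j, hj⟩ := h
  rw [Fintype.mem_piFinset] at hj
  push_neg at hj
  obtain ⟨i, hi⟩ := hj
  rw [Finset.mem_range] at hi
  push_neg at hi
  have h1 : α j i ≤ rowS α j :=
    Finset.single_le_sum (fun _ _ => Nat.zero_le _) (Finset.mem_univ i)
  have h2 : rowS α j ≤ totS α :=
    Finset.single_le_sum (fun _ _ => Nat.zero_le _) (Finset.mem_univ j)
  omega

lemma spikeCoef_eq {d m : ℕ} (lam : ℝ) (α : Fin d × Fin m → Fin d → ℕ) :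
    spikeCoef d m lam α =
      if SEp α then (lam / d) ^ (totS α / 2) * ∏ j, ((rowS α j - 1)‼ : ℝ) else 0 := rfl

lemma sum_ite_coef (d m T s : ℕ) (lam : ℝ) :
    (∑ α ∈ AF d m T, if (∑ j, ∑ i, α j i) = s then spikeCoef d m lam α ^ 2 else 0)
      = ∑ α ∈ Sset d m T s, ((lam / d) ^ (s / 2) * ∏ j, ((rowS α j - 1)‼ : ℝ)) ^ 2 := by
  classical
  rw [Sset, Finset.sum_filter]
  apply Finset.sum_congr rfl
  intro α _
  by_cases h1 : totS α = s
  · by_cases h2 : SEp α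
    · rw [if_pos h1, if_pos ⟨h1, h2⟩, spikeCoef_eq, if_pos h2, h1]
    · rw [if_pos h1, if_neg (fun hc => h2 hc.2), spikeCoef_eq, if_neg h2]
      norm_num
  · rw [if_neg h1, if_neg (fun hc => h1 hc.1)]

lemma X_le (d m T s : ℕ) (lam : ℝ) (hlam : 0 < lam) (hs : 4 ∣ s) :
    (∑ α ∈ Sset d m T s, ((lam / d) ^ (s / 2) * ∏ j, ((rowS α j - 1)‼ : ℝ)) ^ 2)
      ≤ (2 * lam * s / d) ^ s * (d : ℝ) ^ (3 * (s / 4)) * (m : ℝ) ^ (s / 2) := by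
  have hstep : ∀ α ∈ Sset d m T s,
      ((lam / d) ^ (s / 2) * ∏ j, ((rowS α j - 1)‼ : ℝ)) ^ 2
        = (lam / d) ^ s * (((∏ j, (rowS α j - 1)‼ : ℕ) : ℝ)) ^ 2 := by
    intro α _
    rw [mul_pow, ← pow_mul, show s / 2 * 2 = s from by omega]
    push_cast
    ring
  rw [Finset.sum_congr rfl hstep, ← Finset.mul_sum]
  have hcast : (∑ α ∈ Sset d m T s, (((∏ j, (rowS α j - 1)‼ : ℕ) : ℝ)) ^ 2)
      = ((∑ α ∈ Sset d m T s, (∏ j, (rowS α j - 1)‼) ^ 2 : ℕ) : ℝ) := by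
    push_cast
    rfl
  rw [hcast]
  have hnn : (0:ℝ) ≤ (lam / d) ^ s := pow_nonneg (div_nonneg hlam.le (Nat.cast_nonneg d)) s
  have hkey : ((∑ α ∈ Sset d m T s, (∏ j, (rowS α j - 1)‼) ^ 2 : ℕ) : ℝ)
      ≤ (2 * (s:ℝ)) ^ s * (d : ℝ) ^ (3 * (s / 4)) * (m : ℝ) ^ (s / 2) := by
    exact_mod_cast key_count d m T s hs
  have hbase : lam / (d:ℝ) * (2 * (s:ℝ)) = 2 * lam * (s:ℝ) / (d:ℝ) := by ring
  calc (lam / ↑d) ^ s * ((∑ α ∈ Sset d m T s, (∏ j, (rowS α j - 1)‼) ^ 2 : ℕ) : ℝ)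
      ≤ (lam / ↑d) ^ s * ((2 * (s:ℝ)) ^ s * (d : ℝ) ^ (3 * (s / 4)) * (m : ℝ) ^ (s / 2)) :=
        mul_le_mul_of_nonneg_left hkey hnn
    _ = (2 * lam * s / d) ^ s * (d : ℝ) ^ (3 * (s / 4)) * (m : ℝ) ^ (s / 2) := by
        rw [← mul_assoc, ← mul_assoc, ← mul_pow, hbase]

lemma rpow_quarter_pow (d : ℕ) (hd : 0 < d) : ((d:ℝ) ^ ((1:ℝ)/4)) ^ (4:ℕ) = d := by
  rw [← Real.rpow_natCast ((d:ℝ) ^ ((1:ℝ)/4)) 4, ← Real.rpow_mul (Nat.cast_nonneg d)]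
  norm_num

lemma ident_pow (d m s : ℕ) (lam : ℝ) (hd : 0 < d) (hs : 4 ∣ s) :
    (2 * lam * s / d) ^ s * (d : ℝ) ^ (3 * (s / 4)) * (m : ℝ) ^ (s / 2)
      = (2 * lam * s * Real.sqrt m / (d:ℝ) ^ ((1:ℝ)/4)) ^ s := by
  obtain ⟨v, rfl⟩ := hs
  have hdne : ((d:ℝ)) ≠ 0 := Nat.cast_ne_zero.mpr hd.ne'
  have hDpos : (0:ℝ) < (d:ℝ) ^ ((1:ℝ)/4) := Real.rpow_pos_of_pos (by exact_mod_cast hd) _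
  have hD4 : ((d:ℝ) ^ ((1:ℝ)/4)) ^ (4:ℕ) = d := rpow_quarter_pow d hd
  have hM : Real.sqrt m ^ (2:ℕ) = m := Real.sq_sqrt (Nat.cast_nonneg m)
  have hm4 : Real.sqrt m ^ (4:ℕ) = (m:ℝ) ^ (2:ℕ) := by
    rw [show (4:ℕ) = 2 * 2 from rfl, pow_mul, hM]
  have e1 : 4 * v / 4 = v := by omega
  have e2 : 4 * v / 2 = 2 * v := by omega
  rw [e1, e2]
  set B : ℝ := 2 * lam * ((4 * v : ℕ) : ℝ) with hB
  set D : ℝ := (d:ℝ) ^ ((1:ℝ)/4) with hD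
  have hbase : (B / d) ^ (4:ℕ) * (d:ℝ) ^ (3:ℕ) * (m:ℝ) ^ (2:ℕ) = (B * Real.sqrt m / D) ^ (4:ℕ) := by
    rw [div_pow, div_pow, mul_pow B (Real.sqrt m) 4, hm4, hD4]
    field_simp
  calc (B / ↑d) ^ (4 * v) * (↑d : ℝ) ^ (3 * v) * (↑m : ℝ) ^ (2 * v)
      = ((B / ↑d) ^ (4:ℕ)) ^ v * (((↑d : ℝ)) ^ (3:ℕ)) ^ v * (((↑m : ℝ)) ^ (2:ℕ)) ^ v := by
        rw [pow_mul, pow_mul, pow_mul]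
    _ = ((B / ↑d) ^ (4:ℕ) * ((↑d : ℝ)) ^ (3:ℕ) * ((↑m : ℝ)) ^ (2:ℕ)) ^ v := by
        rw [mul_pow, mul_pow]
    _ = ((B * Real.sqrt m / D) ^ (4:ℕ)) ^ v := by rw [hbase]
    _ = (B * Real.sqrt m / D) ^ (4 * v) := by rw [← pow_mul]

/-- Low-degree lower bound for single-spike block mixtures: there are universal constants
`c, C > 0` such that whenever `t` is even and `t λ √m / d^{1/4} ≤ c`, the sum of squared
planted Hermite coefficients over multi-indices of total degree exactly `t` is at most
`(C λ t / d)^t d^{3t/4} m^{t/2}`, and summing over degrees `0 < |α| ≤ t` gives at most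
`C t λ √m / d^{1/4}`. -/
theorem stmt15 :
    ∃ c C : ℝ, 0 < c ∧ 0 < C ∧
      ∀ (d m : ℕ) (lam : ℝ) (t : ℕ), 0 < d → 0 < m → 0 < lam → lam < 1 → Even t →
        (t : ℝ) * lam * Real.sqrt m / (d : ℝ) ^ ((1 : ℝ) / 4) ≤ c →
        ((∑' α : Fin d × Fin m → Fin d → ℕ,
            (if (∑ j, ∑ i, α j i) = t then spikeCoef d m lam α ^ 2 else 0)) ≤
          (C * lam * t / d) ^ t * (d : ℝ) ^ (3 * (t : ℝ) / 4) * (m : ℝ) ^ ((t : ℝ) / 2)) ∧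
        ((∑' α : Fin d × Fin m → Fin d → ℕ,
            (if 0 < (∑ j, ∑ i, α j i) ∧ (∑ j, ∑ i, α j i) ≤ t then
              spikeCoef d m lam α ^ 2 else 0)) ≤
          C * t * lam * Real.sqrt m / (d : ℝ) ^ ((1 : ℝ) / 4)) := by
  classical
  refine ⟨1/24, 12, by norm_num, by norm_num, ?_⟩
  intro d m lam t hd hm hlam hlam1 ht hsmall
  have hd0 : (0:ℝ) < d := by exact_mod_cast hd
  have hDpos : (0:ℝ) < (d:ℝ) ^ ((1:ℝ)/4) := Real.rpow_pos_of_pos hd0 _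
  constructor
  · -- part 1
    have hzero : ∀ α ∉ AF d m t,
        (if (∑ j, ∑ i, α j i) = t then spikeCoef d m lam α ^ 2 else 0) = 0 := by
      intro α hα
      have hc : ¬ ((∑ j, ∑ i, α j i) = t) := by
        intro hc'
        have hc'' : totS α = t := hc'
        have := notin_AF hα
        omega
      rw [if_neg hc]
    rw [tsum_eq_sum hzero, sum_ite_coef d m t t lam]
    by_cases h4 : 4 ∣ t
    · have hrp1 : (d : ℝ) ^ (3 * (t : ℝ) / 4) = (d:ℝ) ^ ((3 * (t / 4) : ℕ)) := by
        rw [← Real.rpow_natCast (d:ℝ) (3 * (t/4))]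
        congr 1
        obtain ⟨v, rfl⟩ := h4
        rw [show 4 * v / 4 = v from by omega]
        push_cast
        ring
      have hrp2 : (m : ℝ) ^ ((t : ℝ) / 2) = (m:ℝ) ^ ((t / 2 : ℕ)) := by
        rw [← Real.rpow_natCast (m:ℝ) (t/2)]
        congr 1
        obtain ⟨v, rfl⟩ := h4
        rw [show 4 * v / 2 = 2 * v from by omega]
        push_cast
        ring
      rw [hrp1, hrp2]
      calc (∑ α ∈ Sset d m t t, ((lam / d) ^ (t / 2) * ∏ j, ((rowS α j - 1)‼ : ℝ)) ^ 2)
          ≤ (2 * lam * t / d) ^ t * (d : ℝ) ^ (3 * (t / 4)) * (m : ℝ) ^ (t / 2) :=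
            X_le d m t t lam hlam h4
        _ ≤ (12 * lam * t / d) ^ t * (d : ℝ) ^ (3 * (t / 4)) * (m : ℝ) ^ (t / 2) := by
            have hb : (0:ℝ) ≤ 2 * lam * t / d := by positivity
            have hbb : 2 * lam * (t:ℝ) / d ≤ 12 * lam * t / d := by
              rw [div_le_div_iff₀ hd0 hd0]
              nlinarith [mul_nonneg (mul_nonneg hlam.le (Nat.cast_nonneg (α := ℝ) t)) hd0.le]
            exact mul_le_mul_of_nonneg_right (mul_le_mul_of_nonneg_right
              (pow_le_pow_left₀ hb hbb t) (by positivity)) (by positivity)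
    · rw [Sset_eq_empty h4, Finset.sum_empty]
      positivity
  · -- part 2
    set r : ℝ := (t : ℝ) * lam * Real.sqrt m / (d : ℝ) ^ ((1 : ℝ) / 4) with hrdef
    have hr0 : 0 ≤ r := by positivity
    have hrc : r ≤ 1/24 := hsmall
    have h2r : 2 * r ≤ 1/2 := by linarith
    have hzero2 : ∀ α ∉ AF d m t,
        (if 0 < (∑ j, ∑ i, α j i) ∧ (∑ j, ∑ i, α j i) ≤ t then
          spikeCoef d m lam α ^ 2 else 0) = 0 := by
      intro α hα
      have hc : ¬ (0 < (∑ j, ∑ i, α j i) ∧ (∑ j, ∑ i, α j i) ≤ t) := by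
        rintro ⟨h1', h2'⟩
        have h2'' : totS α ≤ t := h2'
        have := notin_AF hα
        omega
      rw [if_neg hc]
    rw [tsum_eq_sum hzero2, ← Finset.sum_filter]
    have hmapsto : ∀ α ∈ (AF d m t).filter
        (fun α => 0 < (∑ j, ∑ i, α j i) ∧ (∑ j, ∑ i, α j i) ≤ t),
        totS α ∈ Finset.Icc 1 t := by
      intro α hα
      have h := (Finset.mem_filter.mp hα).2
      have h1' : 0 < totS α := h.1
      have h2' : totS α ≤ t := h.2
      rw [Finset.mem_Icc]
      omega
    rw [← Finset.sum_fiberwise_of_maps_to hmapsto (fun α => spikeCoef d m lam α ^ 2)]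
    have hinner : ∀ s' ∈ Finset.Icc 1 t,
        (∑ α ∈ ((AF d m t).filter
            (fun α => 0 < (∑ j, ∑ i, α j i) ∧ (∑ j, ∑ i, α j i) ≤ t)).filter
            (fun α => totS α = s'),
          spikeCoef d m lam α ^ 2) ≤ 2 * r * (1/2 : ℝ) ^ (s' - 1) := by
      intro s' hs'
      rw [Finset.mem_Icc] at hs'
      have hFF : ((AF d m t).filter
            (fun α => 0 < (∑ j, ∑ i, α j i) ∧ (∑ j, ∑ i, α j i) ≤ t)).filter
            (fun α => totS α = s')
          = (AF d m t).filter (fun α => (∑ j, ∑ i, α j i) = s') := by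
        rw [Finset.filter_filter]
        apply Finset.filter_congr
        intro α _
        constructor
        · rintro ⟨_, h⟩; exact h
        · intro h
          have h' : totS α = s' := h
          exact ⟨⟨by omega, by omega⟩, h'⟩
      rw [hFF, Finset.sum_filter, sum_ite_coef d m t s' lam]
      by_cases h4 : 4 ∣ s'
      · calc (∑ α ∈ Sset d m t s', ((lam / d) ^ (s' / 2) * ∏ j, ((rowS α j - 1)‼ : ℝ)) ^ 2)
            ≤ (2 * lam * s' / d) ^ s' * (d : ℝ) ^ (3 * (s' / 4)) * (m : ℝ) ^ (s' / 2) :=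
              X_le d m t s' lam hlam h4
          _ = (2 * lam * s' * Real.sqrt m / (d:ℝ) ^ ((1:ℝ)/4)) ^ s' :=
              ident_pow d m s' lam hd h4
          _ ≤ (2 * r) ^ s' := by
              apply pow_le_pow_left₀ (by positivity)
              rw [hrdef]
              have hst : ((s' : ℝ)) ≤ (t : ℝ) := by exact_mod_cast hs'.2
              have h2r' : 2 * ((t:ℝ) * lam * Real.sqrt m / (d:ℝ) ^ ((1:ℝ)/4))
                  = 2 * (t:ℝ) * lam * Real.sqrt m / (d:ℝ) ^ ((1:ℝ)/4) := by ring
              rw [h2r', div_le_div_iff₀ hDpos hDpos]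
              nlinarith [mul_nonneg (mul_nonneg (mul_nonneg
                (sub_nonneg.mpr hst) hlam.le) (Real.sqrt_nonneg (m:ℝ))) hDpos.le]
          _ ≤ 2 * r * (1/2 : ℝ) ^ (s' - 1) := by
              have hstep : (2*r) ^ s' = (2*r) * (2*r) ^ (s' - 1) := by
                rw [← pow_succ']
                congr 1
                omega
              rw [hstep]
              apply mul_le_mul_of_nonneg_left _ (by linarith)
              exact pow_le_pow_left₀ (by linarith) h2r _
      · rw [Sset_eq_empty h4, Finset.sum_empty]
        positivity
    calc (∑ s' ∈ Finset.Icc 1 t, ∑ α ∈ ((AF d m t).filter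
            (fun α => 0 < (∑ j, ∑ i, α j i) ∧ (∑ j, ∑ i, α j i) ≤ t)).filter
            (fun α => totS α = s'), spikeCoef d m lam α ^ 2)
        ≤ ∑ s' ∈ Finset.Icc 1 t, 2 * r * (1/2 : ℝ) ^ (s' - 1) :=
          Finset.sum_le_sum hinner
      _ = 2 * r * ∑ s' ∈ Finset.Icc 1 t, (1/2 : ℝ) ^ (s' - 1) := by
          rw [Finset.mul_sum]
      _ ≤ 2 * r * 2 := by
          apply mul_le_mul_of_nonneg_left _ (by linarith)
          have hre : ∑ s' ∈ Finset.Icc 1 t, (1/2 : ℝ) ^ (s' - 1)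
              = ∑ i ∈ Finset.range t, (1/2 : ℝ) ^ i := by
            rw [← Finset.Ico_add_one_right_eq_Icc, Finset.sum_Ico_eq_sum_range]
            simp
          rw [hre]
          exact sum_geometric_two_le t
      _ ≤ 12 * t * lam * Real.sqrt m / (d : ℝ) ^ ((1 : ℝ) / 4) := by
          have h12 : (12:ℝ) * t * lam * Real.sqrt m / (d : ℝ) ^ ((1 : ℝ) / 4) = 12 * r := by
            rw [hrdef]
            ring
          rw [h12]
          linarith
end main
end
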